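/- arXiv:2102.12952 — 4 statements merged into one kernel-verified Lean document; each statement's English description precedes it below -/
import Mathlib

section
/- Let S be a measurable space, let X = (X_1, X_2, …) be a stationary and ergodic S-valued sequence, realized as the coordinate process on S^ℕ with left shift T (so the law of X on S^ℕ is T-invariant and ergodic). Let g_n : S^ℕ → ℝ (n ≥ 1) and g : S^ℕ → ℝ be measurable functions such that g_n(X) → g(X) almost surely and E[sup_n |g_n(X)|] < ∞. Then (1/n) ∑_{i=0}^{n−1} g_n(T^i X) → E[g(X)] almost surely as n → ∞. -/
open MeasureTheory Filter

noncomputable section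

namespace BreimanAux

variable {α : Type*} [MeasurableSpace α] {μ : Measure α} {T : α → α}

lemma measurable_birkhoffSum (hT : Measurable T) {f : α → ℝ} (hf : Measurable f) (n : ℕ) :
    Measurable (birkhoffSum T f n) :=
  Finset.measurable_sum _ fun i _ => hf.comp (hT.iterate i)

lemma integrable_birkhoffSum (hT : MeasurePreserving T μ μ) {f : α → ℝ}
    (hf : Integrable f μ) (n : ℕ) : Integrable (birkhoffSum T f n) μ := by
  apply integrable_finset_sum
  intro i _
  exact ((hT.iterate i).integrable_comp hf.aestronglyMeasurable).mpr hf

/-- running maximum of Birkhoff sums `S_0, S_1, ..., S_N` (with `S_0 = 0`). -/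
def M (T : α → α) (f : α → ℝ) : ℕ → α → ℝ
  | 0 => fun _ => 0
  | (N + 1) => fun x => max (M T f N x) (birkhoffSum T f (N + 1) x)

lemma M_succ (T : α → α) (f : α → ℝ) (N : ℕ) (x : α) :
    M T f (N + 1) x = max (M T f N x) (birkhoffSum T f (N + 1) x) := rfl

lemma M_nonneg (f : α → ℝ) : ∀ N x, 0 ≤ M T f N x
  | 0, x => le_refl 0
  | (N + 1), x => le_trans (M_nonneg f N x) (le_max_left _ _)

lemma birkhoffSum_le_M (f : α → ℝ) : ∀ N k, k ≤ N → ∀ x, birkhoffSum T f k x ≤ M T f N x := by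
  intro N
  induction N with
  | zero => intro k hk x; interval_cases k; simp [M, birkhoffSum_zero]
  | succ N ih =>
    intro k hk x
    rcases Nat.lt_or_ge k (N + 1) with h | h
    · exact le_trans (ih k (Nat.lt_succ_iff.mp h) x) (le_max_left _ _)
    · have : k = N + 1 := le_antisymm hk h
      subst this
      exact le_max_right _ _

lemma exists_M_eq (f : α → ℝ) : ∀ N x, ∃ k, k ≤ N ∧ M T f N x = birkhoffSum T f k x := by
  intro N
  induction N with
  | zero => intro x; exact ⟨0, le_refl 0, by simp [M, birkhoffSum_zero]⟩
  | succ N ih =>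
    intro x
    rcases ih x with ⟨k, hk, hke⟩
    rcases le_or_gt (birkhoffSum T f (N + 1) x) (M T f N x) with h | h
    · refine ⟨k, hk.trans (Nat.le_succ N), ?_⟩
      rw [M_succ, max_eq_left h, hke]
    · exact ⟨N + 1, le_refl _, by rw [M_succ, max_eq_right h.le]⟩

lemma measurable_M (hT : Measurable T) {f : α → ℝ} (hf : Measurable f) :
    ∀ N, Measurable (M T f N)
  | 0 => measurable_const
  | (N + 1) => (measurable_M hT hf N).max (measurable_birkhoffSum hT hf (N + 1))

lemma integrable_M (hT : MeasurePreserving T μ μ) [IsFiniteMeasure μ] {f : α → ℝ}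
    (hf : Integrable f μ) : ∀ N, Integrable (M T f N) μ
  | 0 => integrable_const 0
  | (N + 1) => by
    have h1 := integrable_M hT hf N
    have h2 := integrable_birkhoffSum hT hf (N + 1)
    have := h1.sup h2
    exact this

lemma M_key (f : α → ℝ) (N : ℕ) (x : α) (hx : 0 < M T f N x) :
    M T f N x ≤ f x + M T f N (T x) := by
  rcases exists_M_eq f N x with ⟨k, hk, hke⟩
  rcases k with _ | j
  · rw [hke, birkhoffSum_zero] at hx; exact absurd hx (lt_irrefl 0)
  · rw [hke, birkhoffSum_succ']
    have : birkhoffSum T f j (T x) ≤ M T f N (T x) :=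
      birkhoffSum_le_M f N j (le_trans (Nat.le_succ j) hk) (T x)
    linarith

/-- **Maximal ergodic theorem** (Garsia's proof). -/
lemma maximal_ergodic (hT : MeasurePreserving T μ μ) [IsFiniteMeasure μ] {f : α → ℝ}
    (hfm : Measurable f) (hfi : Integrable f μ) :
    0 ≤ ∫ x in {x | ∃ n, 1 ≤ n ∧ 0 < birkhoffSum T f n x}, f x ∂μ := by
  set E : ℕ → Set α := fun N => {x | 0 < M T f N x} with hE
  have hMmeas : ∀ N, Measurable (M T f N) := measurable_M hT.measurable hfm
  have hMint : ∀ N, Integrable (M T f N) μ := integrable_M hT hfi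
  have hMTint : ∀ N, Integrable (fun x => M T f N (T x)) μ := fun N =>
    (hT.integrable_comp (hMmeas N).aestronglyMeasurable).mpr (hMint N)
  have hEmeas : ∀ N, MeasurableSet (E N) := fun N =>
    measurableSet_lt measurable_const (hMmeas N)
  -- finite-N maximal inequality
  have step : ∀ N, 0 ≤ ∫ x in E N, f x ∂μ := by
    intro N
    have h1 : ∫ x in E N, (M T f N x - M T f N (T x)) ∂μ ≤ ∫ x in E N, f x ∂μ := by
      apply setIntegral_mono_on ((hMint N).sub (hMTint N)).integrableOn hfi.integrableOn
        (hEmeas N)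
      intro x hx
      simp only [Pi.sub_apply]
      have hx' : 0 < M T f N x := hx
      have := M_key f N x hx'
      linarith
    have h2 : ∫ x in E N, (M T f N x - M T f N (T x)) ∂μ
        = ∫ x in E N, M T f N x ∂μ - ∫ x in E N, M T f N (T x) ∂μ :=
      integral_sub (hMint N).integrableOn (hMTint N).integrableOn
    have h3 : ∫ x in E N, M T f N x ∂μ = ∫ x, M T f N x ∂μ := by
      apply setIntegral_eq_integral_of_forall_compl_eq_zero
      intro x hx
      exact le_antisymm (not_lt.mp hx) (M_nonneg f N x)
    have h4 : ∫ x in E N, M T f N (T x) ∂μ ≤ ∫ x, M T f N (T x) ∂μ :=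
      setIntegral_le_integral (hMTint N) (ae_of_all _ fun x => M_nonneg f N (T x))
    have h5 : ∫ x, M T f N (T x) ∂μ = ∫ x, M T f N x ∂μ := by
      have h := integral_map (μ := μ) hT.measurable.aemeasurable
        ((hMmeas N).aestronglyMeasurable : AEStronglyMeasurable (M T f N) (Measure.map T μ))
      rw [hT.map_eq] at h
      exact h.symm
    linarith
  -- pass to the limit
  have hmono : Monotone E := by
    apply monotone_nat_of_le_succ
    intro N x hx
    have hx' : 0 < M T f N x := hx
    have : 0 < M T f (N + 1) x := by
      rw [M_succ]
      exact lt_of_lt_of_le hx' (le_max_left _ _)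
    exact this
  have hU : (⋃ N, E N) = {x | ∃ n, 1 ≤ n ∧ 0 < birkhoffSum T f n x} := by
    ext x
    simp only [Set.mem_iUnion, hE, Set.mem_setOf_eq]
    constructor
    · rintro ⟨N, hN⟩
      rcases exists_M_eq f N x with ⟨k, hk, hke⟩
      rcases k with _ | j
      · rw [hke, birkhoffSum_zero] at hN; exact absurd hN (lt_irrefl 0)
      · exact ⟨j + 1, Nat.succ_le_succ (Nat.zero_le j), by rw [← hke]; exact hN⟩
    · rintro ⟨n, _, hpos⟩
      exact ⟨n, lt_of_lt_of_le hpos (birkhoffSum_le_M f n n le_rfl x)⟩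
  have htend := tendsto_setIntegral_of_monotone hEmeas hmono hfi.integrableOn
  have := ge_of_tendsto' htend step
  rwa [hU] at this

/-- The (strictly invariant) set where `limsup Sₙ/n ≥ lam`. -/
def ASet (T : α → α) (f : α → ℝ) (lam : ℝ) : Set α :=
  {x | ∀ q : ℚ, 0 < q → ∀ N : ℕ,
    ∃ n, max N 1 ≤ n ∧ (n : ℝ) * (lam - q) < birkhoffSum T f n x}

lemma measurable_ASet (hT : Measurable T) {f : α → ℝ} (hf : Measurable f) (lam : ℝ) :
    MeasurableSet (ASet T f lam) := by
  have : ASet T f lam = ⋂ (q : ℚ), ⋂ (_ : 0 < q), ⋂ (N : ℕ), ⋃ (n : ℕ),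
      ⋃ (_ : max N 1 ≤ n), {x | (n : ℝ) * (lam - q) < birkhoffSum T f n x} := by
    ext x
    simp [ASet]
  rw [this]
  exact MeasurableSet.iInter fun q => MeasurableSet.iInter fun _ =>
    MeasurableSet.iInter fun N => MeasurableSet.iUnion fun n => MeasurableSet.iUnion fun _ =>
      measurableSet_lt measurable_const (measurable_birkhoffSum hT hf n)

lemma preimage_ASet (T : α → α) (f : α → ℝ) (lam : ℝ) :
    T ⁻¹' (ASet T f lam) = ASet T f lam := by
  ext x
  simp only [Set.mem_preimage, ASet, Set.mem_setOf_eq]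
  constructor
  · -- T x ∈ A → x ∈ A
    intro h q hq N
    have hq2 : 0 < q / 2 := by positivity
    have hq2' : (0:ℝ) < (q:ℝ) / 2 := by exact_mod_cast hq2
    set m₀ : ℕ := ⌈(lam - (q:ℝ) - f x) / ((q:ℝ) / 2)⌉₊ with hm₀
    obtain ⟨m, hm, hSm⟩ := h (q / 2) hq2 (max N m₀)
    have hmN : N ≤ m := le_trans (le_trans (le_max_left N m₀) (le_max_left _ 1)) hm
    have hmm₀ : m₀ ≤ m := le_trans (le_trans (le_max_right N m₀) (le_max_left _ 1)) hm
    refine ⟨m + 1, ?_, ?_⟩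
    · exact max_le (le_trans hmN (Nat.le_succ m)) (Nat.succ_le_succ (Nat.zero_le m))
    · have hcast : ((q:ℚ) / 2 : ℚ) = (q : ℚ) / 2 := rfl
      have hSmr : (m : ℝ) * (lam - (q:ℝ) / 2) < birkhoffSum T f m (T x) := by
        have : ((q / 2 : ℚ) : ℝ) = (q : ℝ) / 2 := by push_cast; ring
        rw [← this]; exact hSm
      have hge : lam - (q:ℝ) - f x ≤ (m : ℝ) * ((q:ℝ) / 2) := by
        have h1 : (lam - (q:ℝ) - f x) / ((q:ℝ) / 2) ≤ (m₀ : ℝ) := Nat.le_ceil _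
        have h2 : (m₀ : ℝ) ≤ (m : ℝ) := by exact_mod_cast hmm₀
        calc lam - (q:ℝ) - f x = ((lam - (q:ℝ) - f x) / ((q:ℝ) / 2)) * ((q:ℝ) / 2) := by
              field_simp
          _ ≤ (m : ℝ) * ((q:ℝ) / 2) :=
              mul_le_mul_of_nonneg_right (h1.trans h2) hq2'.le
      rw [birkhoffSum_succ']
      have hkey : ((m : ℝ) + 1) * (lam - (q:ℝ))
          = f x + (m : ℝ) * (lam - (q:ℝ) / 2) + ((lam - (q:ℝ) - f x) - (m:ℝ) * ((q:ℝ)/2)) := by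
        ring
      push_cast
      rw [hkey]
      linarith
  · -- x ∈ A → T x ∈ A
    intro h q hq N
    have hq2 : 0 < q / 2 := by positivity
    have hq2' : (0:ℝ) < (q:ℝ) / 2 := by exact_mod_cast hq2
    set m₀ : ℕ := ⌈(f x - lam + (q:ℝ) / 2) / ((q:ℝ) / 2)⌉₊ with hm₀
    obtain ⟨n, hn, hSn⟩ := h (q / 2) hq2 (max N m₀ + 2)
    have hn' : max N m₀ + 2 ≤ n := le_trans (le_max_left _ 1) hn
    obtain ⟨m, rfl⟩ : ∃ m, n = m + 1 := ⟨n - 1, by omega⟩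
    have hmN : N ≤ m := by omega
    have hmm₀ : m₀ ≤ m := by omega
    have hm1 : 1 ≤ m := by omega
    refine ⟨m, max_le hmN hm1, ?_⟩
    have hSnr : ((m : ℝ) + 1) * (lam - (q:ℝ) / 2) < birkhoffSum T f (m + 1) x := by
      have hc : ((q / 2 : ℚ) : ℝ) = (q : ℝ) / 2 := by push_cast; ring
      have := hSn
      rw [hc] at this
      push_cast at this ⊢
      convert this using 2
    have hge : f x - lam + (q:ℝ) / 2 ≤ (m : ℝ) * ((q:ℝ) / 2) := by
      have h1 : (f x - lam + (q:ℝ) / 2) / ((q:ℝ) / 2) ≤ (m₀ : ℝ) := Nat.le_ceil _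
      have h2 : (m₀ : ℝ) ≤ (m : ℝ) := by exact_mod_cast hmm₀
      calc f x - lam + (q:ℝ) / 2
          = ((f x - lam + (q:ℝ) / 2) / ((q:ℝ) / 2)) * ((q:ℝ) / 2) := by field_simp
        _ ≤ (m : ℝ) * ((q:ℝ) / 2) := mul_le_mul_of_nonneg_right (h1.trans h2) hq2'.le
    rw [birkhoffSum_succ'] at hSnr
    have hkey : (m : ℝ) * (lam - (q:ℝ))
        = ((m : ℝ) + 1) * (lam - (q:ℝ) / 2) - f x
          - (((m:ℝ) * ((q:ℝ)/2)) - (f x - lam + (q:ℝ)/2)) - (q:ℝ) * 0 := by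
      ring
    linarith

lemma ASet_null (hErg : Ergodic T μ) [IsProbabilityMeasure μ] {f : α → ℝ}
    (hfm : Measurable f) (hfi : Integrable f μ) {lam : ℝ} (hlam : ∫ x, f x ∂μ < lam) :
    μ (ASet T f lam) = 0 := by
  have hmp : MeasurePreserving T μ μ := hErg.toMeasurePreserving
  have hAmeas := measurable_ASet hmp.measurable hfm lam
  rcases hErg.toPreErgodic.ae_empty_or_univ hAmeas (preimage_ASet T f lam) with h | h
  · exact ae_eq_empty.mp h
  · exfalso
    have hAc : μ (ASet T f lam)ᶜ = 0 := ae_eq_univ.mp h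
    set lam' : ℝ := (∫ x, f x ∂μ + lam) / 2 with hlam'
    have hlam'1 : ∫ x, f x ∂μ < lam' := by rw [hlam']; linarith
    have hlam'2 : lam' < lam := by rw [hlam']; linarith
    obtain ⟨q, hq0, hqlt⟩ := exists_rat_btwn (sub_pos.mpr hlam'2)
    have hq0' : (0:ℚ) < q := by exact_mod_cast hq0
    set g : α → ℝ := fun x => f x - lam' with hg
    have hgm : Measurable g := hfm.sub measurable_const
    have hgi : Integrable g μ := hfi.sub (integrable_const _)
    have hS : ∀ n x, birkhoffSum T g n x = birkhoffSum T f n x - n * lam' := by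
      intro n x
      simp only [birkhoffSum, hg, Finset.sum_sub_distrib, Finset.sum_const,
        Finset.card_range, nsmul_eq_mul]
    have hmet := maximal_ergodic hmp hgm hgi
    set E := {x | ∃ n, 1 ≤ n ∧ 0 < birkhoffSum T g n x} with hEdef
    have hEmeas : MeasurableSet E := by
      have : E = ⋃ (n : ℕ), ⋃ (_ : 1 ≤ n), {x | 0 < birkhoffSum T g n x} := by
        ext x; simp [hEdef]
      rw [this]
      exact MeasurableSet.iUnion fun n => MeasurableSet.iUnion fun _ =>
        measurableSet_lt measurable_const (measurable_birkhoffSum hmp.measurable hgm n)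
    have hAE : ASet T f lam ⊆ E := by
      intro x hx
      obtain ⟨n, hn, hlt⟩ := hx q hq0' 1
      have hn1 : 1 ≤ n := le_trans (le_max_right 1 1) hn
      refine ⟨n, hn1, ?_⟩
      rw [hS]
      have hnn : (0:ℝ) ≤ (n:ℝ) := Nat.cast_nonneg n
      have : (n:ℝ) * lam' ≤ (n:ℝ) * (lam - (q:ℝ)) := by
        apply mul_le_mul_of_nonneg_left _ hnn
        linarith
      linarith
    have hEc : μ Eᶜ = 0 :=
      measure_mono_null (Set.compl_subset_compl.mpr hAE) hAc
    have hsplit := integral_add_compl hEmeas hgi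
    have hzero : ∫ x in Eᶜ, g x ∂μ = 0 := by
      rw [Measure.restrict_eq_zero.mpr hEc]
      exact integral_zero_measure _
    have hint_g : ∫ x, g x ∂μ = ∫ x, f x ∂μ - lam' := by
      rw [hg]
      rw [integral_sub hfi (integrable_const _), integral_const]
      simp [measure_univ]
    rw [hzero, add_zero] at hsplit
    rw [hsplit, hint_g] at hmet
    linarith

lemma eventually_upper (hErg : Ergodic T μ) [IsProbabilityMeasure μ] {f : α → ℝ}
    (hfm : Measurable f) (hfi : Integrable f μ) :
    ∀ᵐ x ∂μ, ∀ lam : ℚ, ∫ y, f y ∂μ < lam →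
      ∀ᶠ n in atTop, birkhoffSum T f n x ≤ n * lam := by
  rw [ae_all_iff]
  intro lam
  by_cases hl : ∫ y, f y ∂μ < (lam : ℝ)
  · have hnull := ASet_null hErg hfm hfi hl
    have h2 : ∀ᵐ x ∂μ, x ∉ ASet T f lam := by
      rw [ae_iff]
      simpa using hnull
    filter_upwards [h2] with x hx _
    simp only [ASet, Set.mem_setOf_eq] at hx
    push_neg at hx
    obtain ⟨q, hq, N, hN⟩ := hx
    rw [eventually_atTop]
    refine ⟨max N 1, fun n hn => ?_⟩
    have h := hN n hn
    have hq' : (0:ℝ) < (q:ℝ) := by exact_mod_cast hq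
    have hnn : (0:ℝ) ≤ (n:ℝ) := Nat.cast_nonneg n
    have : (n:ℝ) * ((lam:ℝ) - (q:ℝ)) ≤ (n:ℝ) * (lam:ℝ) := by
      apply mul_le_mul_of_nonneg_left _ hnn
      linarith
    linarith
  · filter_upwards with x hcon
    exact absurd hcon hl

/-- **Birkhoff's pointwise ergodic theorem** (ergodic case). -/
theorem birkhoff (hErg : Ergodic T μ) [IsProbabilityMeasure μ] {f : α → ℝ}
    (hfm : Measurable f) (hfi : Integrable f μ) :
    ∀ᵐ x ∂μ, Tendsto (fun n : ℕ => (1 / n : ℝ) * birkhoffSum T f n x) atTop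
      (nhds (∫ x, f x ∂μ)) := by
  have hup := eventually_upper hErg hfm hfi
  have hdn := eventually_upper hErg (f := fun y => -(f y)) hfm.neg hfi.neg
  have hneg : ∀ n x, birkhoffSum T (fun y => -(f y)) n x = -birkhoffSum T f n x := by
    intro n x
    simp [birkhoffSum, Finset.sum_neg_distrib]
  have hintneg : ∫ x, -(f x) ∂μ = -∫ x, f x ∂μ := integral_neg f
  filter_upwards [hup, hdn] with x hux hdx
  rw [Metric.tendsto_atTop]
  intro ε hε
  set I : ℝ := ∫ y, f y ∂μ with hI
  obtain ⟨l1, hl11, hl12⟩ := exists_rat_btwn (show I < I + ε by linarith)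
  obtain ⟨l2, hl21, hl22⟩ := exists_rat_btwn (show -I < -I + ε by linarith)
  have h1 := hux l1 hl11
  have h2 := hdx l2 (by rw [hintneg]; rw [hI] at hl21; exact hl21)
  rw [eventually_atTop] at h1 h2
  obtain ⟨N1, hN1⟩ := h1
  obtain ⟨N2, hN2⟩ := h2
  refine ⟨max (max N1 N2) 1, fun n hn => ?_⟩
  have hn1 : N1 ≤ n := le_trans (le_trans (le_max_left N1 N2) (le_max_left _ 1)) hn
  have hn2 : N2 ≤ n := le_trans (le_trans (le_max_right N1 N2) (le_max_left _ 1)) hn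
  have hnp : 1 ≤ n := le_trans (le_max_right _ 1) hn
  have hnr : (0:ℝ) < (n:ℝ) := by exact_mod_cast hnp
  have hA := hN1 n hn1
  have hB := hN2 n hn2
  rw [hneg] at hB
  have hrw : (1 / n : ℝ) * birkhoffSum T f n x = birkhoffSum T f n x / (n:ℝ) :=
    one_div_mul_eq_div _ _
  have hup' : birkhoffSum T f n x / (n:ℝ) ≤ (l1:ℝ) := by
    rw [div_le_iff₀ hnr]
    linarith [hA]
  have hdn' : -(l2:ℝ) ≤ birkhoffSum T f n x / (n:ℝ) := by
    rw [le_div_iff₀ hnr]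
    linarith [hB]
  rw [Real.dist_eq, abs_lt, hrw]
  constructor
  · linarith
  · linarith

end BreimanAux

open BreimanAux

/-- **Breiman's generalized ergodic theorem.** Let `P` be a stationary ergodic law
on `S^ℕ` (i.e. invariant and ergodic for the left shift `T`). If the measurable
functions `g_n` satisfy `g_n → g` `P`-a.s. and `E[sup_n |g_n|] < ∞`, then
`(1/n) ∑_{i=0}^{n-1} g_n(T^i X) → E[g(X)]` almost surely. -/
theorem breiman_generalized_ergodic_theorem
    {S : Type*} [MeasurableSpace S]
    (P : Measure (ℕ → S)) [IsProbabilityMeasure P]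
    (T : (ℕ → S) → ℕ → S) (hT : T = fun ω k => ω (k + 1))
    (hErg : Ergodic T P)
    (g : ℕ → (ℕ → S) → ℝ) (g₀ : (ℕ → S) → ℝ)
    (hg_meas : ∀ n, Measurable (g n)) (hg₀_meas : Measurable g₀)
    (hconv : ∀ᵐ ω ∂P, Tendsto (fun n => g n ω) atTop (nhds (g₀ ω)))
    (hdom : ∫⁻ ω, ⨆ n, ENNReal.ofReal |g n ω| ∂P < ⊤) :
    ∀ᵐ ω ∂P,
      Tendsto (fun n : ℕ => (1 / n : ℝ) * ∑ i ∈ Finset.range n, g n (T^[i] ω))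
        atTop (nhds (∫ ω, g₀ ω ∂P)) := by
  classical
  have hmp : MeasurePreserving T P P := hErg.toMeasurePreserving
  set F : (ℕ → S) → ENNReal := fun x => ⨆ n, ENNReal.ofReal |g n x| with hFdef
  have hFmeas : Measurable F :=
    Measurable.iSup fun n => ((hg_meas n).abs).ennreal_ofReal
  have hofReal : ∀ (r : ℝ), (‖r‖₊ : ENNReal) = ENNReal.ofReal |r| := by
    intro r
    rw [← Real.norm_eq_abs, ofReal_norm, enorm_eq_nnnorm]
  -- integrability of each g n
  have hgint : ∀ n, Integrable (g n) P := by
    intro n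
    refine ⟨(hg_meas n).aestronglyMeasurable, ?_⟩
    unfold HasFiniteIntegral
    calc ∫⁻ x, (‖g n x‖₊ : ENNReal) ∂P ≤ ∫⁻ x, F x ∂P := by
          apply lintegral_mono
          intro x
          beta_reduce
          rw [hofReal]
          exact le_iSup (fun k => ENNReal.ofReal |g k x|) n
      _ < ⊤ := hdom
  -- a.e. bound on g₀
  have hg₀F : ∀ᵐ x ∂P, (‖g₀ x‖₊ : ENNReal) ≤ F x := by
    filter_upwards [hconv] with x hx
    have h1 : Tendsto (fun n => (‖g n x‖₊ : ENNReal)) atTop (nhds (‖g₀ x‖₊ : ENNReal)) := by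
      rw [ENNReal.tendsto_coe]
      exact (continuous_nnnorm.tendsto _).comp hx
    apply le_of_tendsto' h1
    intro n
    rw [hofReal]
    exact le_iSup (fun k => ENNReal.ofReal |g k x|) n
  have hg₀int : Integrable g₀ P := by
    refine ⟨hg₀_meas.aestronglyMeasurable, ?_⟩
    unfold HasFiniteIntegral
    calc ∫⁻ x, (‖g₀ x‖₊ : ENNReal) ∂P ≤ ∫⁻ x, F x ∂P := lintegral_mono_ae hg₀F
      _ < ⊤ := hdom
  -- the dominating tail sup
  set D : ℕ → (ℕ → S) → ENNReal := fun m x => ⨆ k, ENNReal.ofReal |g (m + k) x - g₀ x|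
    with hDdef
  have hDmeas : ∀ m, Measurable (D m) := fun m =>
    Measurable.iSup fun k => (((hg_meas (m + k)).sub hg₀_meas).abs).ennreal_ofReal
  have hDle : ∀ m x, D m x ≤ F x + (‖g₀ x‖₊ : ENNReal) := by
    intro m x
    apply iSup_le
    intro k
    calc ENNReal.ofReal |g (m + k) x - g₀ x|
        = (‖g (m + k) x - g₀ x‖₊ : ENNReal) := (hofReal _).symm
      _ ≤ (‖g (m + k) x‖₊ : ENNReal) + (‖g₀ x‖₊ : ENNReal) := by
          exact_mod_cast nnnorm_sub_le _ _
      _ ≤ F x + (‖g₀ x‖₊ : ENNReal) := by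
          gcongr
          rw [hofReal]
          exact le_iSup (fun n => ENNReal.ofReal |g n x|) (m + k)
  set Gm : ℕ → (ℕ → S) → ℝ := fun m x => (D m x).toReal with hGmdef
  have hGmmeas : ∀ m, Measurable (Gm m) := fun m => (hDmeas m).ennreal_toReal
  have hGmnonneg : ∀ m x, 0 ≤ Gm m x := fun m x => ENNReal.toReal_nonneg
  -- bound function
  set B : (ℕ → S) → ℝ := fun x => (F x + (‖g₀ x‖₊ : ENNReal)).toReal with hBdef
  have hBmeas : Measurable B := (hFmeas.add (hg₀_meas.nnnorm.coe_nnreal_ennreal)).ennreal_toReal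
  have hlintB : ∫⁻ x, F x + (‖g₀ x‖₊ : ENNReal) ∂P < ⊤ := by
    rw [lintegral_add_left hFmeas]
    have h2 : ∫⁻ x, (‖g₀ x‖₊ : ENNReal) ∂P < ⊤ := hg₀int.2
    exact ENNReal.add_lt_top.mpr ⟨hdom, h2⟩
  have hBint : Integrable B P := by
    refine ⟨hBmeas.aestronglyMeasurable, ?_⟩
    unfold HasFiniteIntegral
    calc ∫⁻ x, (‖B x‖₊ : ENNReal) ∂P
        ≤ ∫⁻ x, F x + (‖g₀ x‖₊ : ENNReal) ∂P := by
          apply lintegral_mono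
          intro x
          beta_reduce
          rw [hofReal, hBdef, abs_of_nonneg ENNReal.toReal_nonneg]
          exact ENNReal.ofReal_toReal_le
      _ < ⊤ := hlintB
  have hGmint : ∀ m, Integrable (Gm m) P := by
    intro m
    refine ⟨(hGmmeas m).aestronglyMeasurable, ?_⟩
    unfold HasFiniteIntegral
    calc ∫⁻ x, (‖Gm m x‖₊ : ENNReal) ∂P ≤ ∫⁻ x, D m x ∂P := by
          apply lintegral_mono
          intro x
          beta_reduce
          rw [hofReal, hGmdef, abs_of_nonneg ENNReal.toReal_nonneg]
          exact ENNReal.ofReal_toReal_le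
      _ ≤ ∫⁻ x, F x + (‖g₀ x‖₊ : ENNReal) ∂P := lintegral_mono fun x => hDle m x
      _ < ⊤ := hlintB
  -- a.e. finiteness of F
  have hFfin : ∀ᵐ x ∂P, F x < ⊤ := ae_lt_top hFmeas hdom.ne
  -- "good point" property
  set Good : (ℕ → S) → Prop :=
    fun x => Tendsto (fun n => g n x) atTop (nhds (g₀ x)) ∧ F x < ⊤ with hGooddef
  have hGoodae : ∀ᵐ x ∂P, Good x := by
    filter_upwards [hconv, hFfin] with x h1 h2
    exact ⟨h1, h2⟩
  have hDfin : ∀ x, Good x → D 0 x < ⊤ := by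
    intro x hx
    exact lt_of_le_of_lt (hDle 0 x) (ENNReal.add_lt_top.mpr ⟨hx.2, ENNReal.coe_lt_top⟩)
  have hDfin' : ∀ m x, Good x → D m x ≠ ⊤ := by
    intro m x hx
    refine ne_of_lt (lt_of_le_of_lt (hDle m x) ?_)
    exact ENNReal.add_lt_top.mpr ⟨hx.2, ENNReal.coe_lt_top⟩
  -- pointwise bound at good points
  have hptbound : ∀ x, Good x → ∀ m n, m ≤ n → |g n x - g₀ x| ≤ Gm m x := by
    intro x hx m n hmn
    have h1 : ENNReal.ofReal |g n x - g₀ x| ≤ D m x := by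
      have : n = m + (n - m) := by omega
      rw [this]
      exact le_iSup (fun k => ENNReal.ofReal |g (m + k) x - g₀ x|) (n - m)
    have h2 := ENNReal.toReal_mono (hDfin' m x hx) h1
    rwa [ENNReal.toReal_ofReal (abs_nonneg _)] at h2
  -- Gm m x → 0 at good points
  have hGmtend : ∀ x, Good x → Tendsto (fun m => Gm m x) atTop (nhds 0) := by
    intro x hx
    rw [Metric.tendsto_atTop]
    intro ε hε
    have := hx.1
    rw [Metric.tendsto_atTop] at this
    obtain ⟨M, hM⟩ := this (ε / 2) (by linarith)
    refine ⟨M, fun m hm => ?_⟩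
    have hDb : D m x ≤ ENNReal.ofReal (ε / 2) := by
      apply iSup_le
      intro k
      apply ENNReal.ofReal_le_ofReal
      have := hM (m + k) (by omega)
      rw [Real.dist_eq] at this
      exact this.le
    have : Gm m x ≤ ε / 2 := by
      have h2 := ENNReal.toReal_mono (by simp) hDb
      rwa [ENNReal.toReal_ofReal (by linarith)] at h2
    rw [Real.dist_eq, sub_zero, abs_of_nonneg (hGmnonneg m x)]
    linarith
  -- a.e. bound for dominated convergence
  have hdomGm : ∀ m, ∀ᵐ x ∂P, ‖Gm m x‖ ≤ B x := by
    intro m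
    filter_upwards [hFfin] with x hx
    rw [Real.norm_eq_abs, abs_of_nonneg (hGmnonneg m x)]
    apply ENNReal.toReal_mono
    · exact (ENNReal.add_lt_top.mpr ⟨hx, ENNReal.coe_lt_top⟩).ne
    · exact hDle m x
  -- E[Gm m] → 0
  have hintGm : Tendsto (fun m => ∫ x, Gm m x ∂P) atTop (nhds 0) := by
    have h0 : (0:ℝ) = ∫ _x, (0:ℝ) ∂P := by simp
    rw [h0]
    apply tendsto_integral_of_dominated_convergence B
      (fun m => (hGmmeas m).aestronglyMeasurable) hBint hdomGm
    filter_upwards [hGoodae] with x hx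
    exact hGmtend x hx
  -- Birkhoff for g₀ and each Gm m
  have hbirk₀ := birkhoff hErg hg₀_meas hg₀int
  have hbirkGm : ∀ᵐ x ∂P, ∀ m, Tendsto (fun n : ℕ => (1 / n : ℝ) * birkhoffSum T (Gm m) n x)
      atTop (nhds (∫ x, Gm m x ∂P)) := by
    rw [ae_all_iff]
    intro m
    exact birkhoff hErg (hGmmeas m) (hGmint m)
  -- orbit goodness
  have horbit : ∀ᵐ x ∂P, ∀ i : ℕ, Good (T^[i] x) := by
    rw [ae_all_iff]
    intro i
    exact ((hmp.iterate i).quasiMeasurePreserving.ae hGoodae)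
  filter_upwards [hbirk₀, hbirkGm, horbit] with x hx₀ hxGm hxorb
  rw [Metric.tendsto_atTop]
  intro ε hε
  -- choose m with ∫ Gm m < ε/4
  have := hintGm
  rw [Metric.tendsto_atTop] at this
  obtain ⟨m, hm⟩ := this (ε / 4) (by linarith)
  have hIm : ∫ y, Gm m y ∂P < ε / 4 := by
    have := hm m le_rfl
    rw [Real.dist_eq, sub_zero] at this
    exact lt_of_le_of_lt (le_abs_self _) this
  -- from Birkhoff for Gm m
  have h1 := hxGm m
  rw [Metric.tendsto_atTop] at h1
  obtain ⟨N1, hN1⟩ := h1 (ε / 4) (by linarith)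
  -- from Birkhoff for g₀
  have h2 := hx₀
  rw [Metric.tendsto_atTop] at h2
  obtain ⟨N2, hN2⟩ := h2 (ε / 2) (by linarith)
  refine ⟨max (max N1 N2) (max m 1), fun n hn => ?_⟩
  have hnN1 : N1 ≤ n := le_trans (le_trans (le_max_left N1 N2) (le_max_left _ _)) hn
  have hnN2 : N2 ≤ n := le_trans (le_trans (le_max_right N1 N2) (le_max_left _ _)) hn
  have hnm : m ≤ n := le_trans (le_trans (le_max_left m 1) (le_max_right _ _)) hn
  have hn1 : 1 ≤ n := le_trans (le_trans (le_max_right m 1) (le_max_right _ _)) hn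
  have hnr : (0:ℝ) < (n:ℝ) := by exact_mod_cast hn1
  have hinv : (0:ℝ) ≤ 1 / (n:ℝ) := by positivity
  -- bound on the Gm average
  have hGmavg : (1 / n : ℝ) * birkhoffSum T (Gm m) n x < ε / 2 := by
    have := hN1 n hnN1
    rw [Real.dist_eq] at this
    have h := lt_of_le_of_lt (le_abs_self _) this
    linarith
  -- the main difference bound
  have hkey : |(1 / n : ℝ) * ∑ i ∈ Finset.range n, g n (T^[i] x)
      - (1 / n : ℝ) * birkhoffSum T g₀ n x| ≤ (1 / n : ℝ) * birkhoffSum T (Gm m) n x := by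
    rw [← mul_sub, abs_mul, abs_of_nonneg hinv]
    apply mul_le_mul_of_nonneg_left _ hinv
    unfold birkhoffSum
    rw [← Finset.sum_sub_distrib]
    calc |∑ i ∈ Finset.range n, (g n (T^[i] x) - g₀ (T^[i] x))|
        ≤ ∑ i ∈ Finset.range n, |g n (T^[i] x) - g₀ (T^[i] x)| :=
          Finset.abs_sum_le_sum_abs _ _
      _ ≤ ∑ i ∈ Finset.range n, Gm m (T^[i] x) := by
          apply Finset.sum_le_sum
          intro i _
          exact hptbound (T^[i] x) (hxorb i) m n hnm
  have hg₀avg := hN2 n hnN2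
  rw [Real.dist_eq] at hg₀avg ⊢
  calc |(1 / n : ℝ) * ∑ i ∈ Finset.range n, g n (T^[i] x) - ∫ ω, g₀ ω ∂P|
      ≤ |(1 / n : ℝ) * ∑ i ∈ Finset.range n, g n (T^[i] x)
          - (1 / n : ℝ) * birkhoffSum T g₀ n x|
        + |(1 / n : ℝ) * birkhoffSum T g₀ n x - ∫ ω, g₀ ω ∂P| := abs_sub_le _ _ _
    _ < ε := by
        have hb := hkey
        linarith [hGmavg, hg₀avg]
end
end

section
/- Let X_1, …, X_n (n ≥ 3) be i.i.d. random vectors in ℝ^d with density f and distribution μ, and set R_{n,1}(X_1) = min_{2 ≤ j ≤ n} ‖X_1 − X_j‖ and R_{n−1,1}(X_1) = min_{2 ≤ j ≤ n−1} ‖X_1 − X_j‖. Then (n−1) · E[(ln(μ(B(X_1, R_{n−1,1}(X_1))) / μ(B(X_1, R_{n,1}(X_1)))))^4] ≤ ∫_0^∞ e^{−s^{1/4}} ds (= 24). -/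
open MeasureTheory ProbabilityTheory Filter Metric
open scoped ENNReal

noncomputable section

/-- The distribution `μ` on `ℝ^d` with density `f` w.r.t. Lebesgue measure. -/
def densMeasure (d : ℕ) (f : EuclideanSpace ℝ (Fin d) → ℝ) :
    Measure (EuclideanSpace ℝ (Fin d)) :=
  volume.withDensity fun x => ENNReal.ofReal (f x)

/-- `R_{n,i}(x) = min_{j < n, j ≠ i} ‖x - X_j‖` (0-based indexing of the sample). -/
def nnDist {E : Type*} [PseudoMetricSpace E] {Ω : Type*} (X : ℕ → Ω → E)
    (n i : ℕ) (x : E) (ω : Ω) : ℝ :=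
  sInf ((fun j => dist x (X j ω)) '' {j | j < n ∧ j ≠ i})

set_option linter.unusedSectionVars false
set_option linter.unusedVariables false
set_option maxHeartbeats 1000000

section MeasAux

set_option linter.unusedSectionVars false

variable {α : Type*} [MetricSpace α] [MeasurableSpace α] [OpensMeasurableSpace α]
  (μ : Measure α) [IsProbabilityMeasure μ]

lemma ball_closedBall_aux (x : α) (hsph : ∀ r : ℝ, μ (sphere x r) = 0)
    {c : ℝ≥0∞} {r : ℝ} (h : ∀ r' : ℝ, r' < r → μ (closedBall x r') ≤ c) :
    μ (closedBall x r) ≤ c := by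
  have hball : Metric.ball x r = ⋃ k : ℕ, closedBall x (r - 1 / (k + 1)) := by
    ext y
    simp only [mem_ball, Set.mem_iUnion, mem_closedBall]
    constructor
    · intro hy
      obtain ⟨k, hk⟩ := exists_nat_one_div_lt (sub_pos.2 hy)
      exact ⟨k, by linarith⟩
    · rintro ⟨k, hk⟩
      have : (0:ℝ) < 1 / ((k:ℝ) + 1) := by positivity
      linarith
  have hmono : Monotone (fun k : ℕ => closedBall x (r - 1 / (k + 1))) := by
    intro a b hab
    apply closedBall_subset_closedBall
    have : (1:ℝ) / ((b:ℝ) + 1) ≤ 1 / ((a:ℝ) + 1) := by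
      apply one_div_le_one_div_of_le (by positivity)
      exact_mod_cast by omega
    linarith
  have hb : μ (Metric.ball x r) ≤ c := by
    rw [hball]
    have := tendsto_measure_iUnion_atTop (μ := μ) hmono
    refine le_of_tendsto this (Eventually.of_forall fun k => ?_)
    apply h
    have : (0:ℝ) < 1 / ((k:ℝ) + 1) := by positivity
    linarith
  calc μ (closedBall x r) = μ (Metric.ball x r ∪ sphere x r) := by rw [ball_union_sphere]
    _ ≤ μ (Metric.ball x r) + μ (sphere x r) := measure_union_le _ _
    _ ≤ c + 0 := add_le_add hb (le_of_eq (hsph r))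
    _ = c := add_zero c

lemma cdf_sSup_props (x : α) (hsph : ∀ r : ℝ, μ (sphere x r) = 0)
    {c : ℝ≥0∞} (hc : c < 1) :
    BddAbove {r : ℝ | μ (closedBall x r) ≤ c} ∧
      μ (closedBall x (sSup {r : ℝ | μ (closedBall x r) ≤ c})) ≤ c := by
  set S : Set ℝ := {r | μ (closedBall x r) ≤ c} with hS
  have h0S : (0:ℝ) ∈ S := by
    have h1 : closedBall x (0:ℝ) = {x} := closedBall_zero
    have h2 : μ {x} ≤ μ (sphere x 0) := by
      apply measure_mono
      intro y hy
      rcases hy with rfl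
      simp [mem_sphere]
    simp only [hS, Set.mem_setOf_eq, h1]
    exact le_trans (le_trans h2 (le_of_eq (hsph 0))) zero_le
  obtain ⟨K, hK⟩ : ∃ K : ℕ, c < μ (closedBall x (K : ℝ)) := by
    have huniv : (⋃ k : ℕ, closedBall x (k : ℝ)) = Set.univ := by
      ext y
      simp only [Set.mem_iUnion, mem_closedBall, Set.mem_univ, iff_true]
      obtain ⟨k, hk⟩ := exists_nat_ge (dist y x)
      exact ⟨k, hk⟩
    have hmono : Monotone (fun k : ℕ => closedBall x (k : ℝ)) := fun a b hab =>
      closedBall_subset_closedBall (by exact_mod_cast hab)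
    have htend := tendsto_measure_iUnion_atTop (μ := μ) hmono
    rw [huniv, measure_univ] at htend
    exact (htend.eventually (isOpen_Ioi.eventually_mem hc)).exists
  have hSbdd : BddAbove S := by
    refine ⟨K, fun r hr => ?_⟩
    by_contra hcon
    push_neg at hcon
    have : μ (closedBall x (K:ℝ)) ≤ μ (closedBall x r) :=
      measure_mono (closedBall_subset_closedBall hcon.le)
    exact absurd (le_trans this hr) (not_le.2 hK)
  have hSne : S.Nonempty := ⟨0, h0S⟩
  have hlt : ∀ r' : ℝ, r' < sSup S → μ (closedBall x r') ≤ c := by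
    intro r' hr'
    obtain ⟨r'', hr''S, hlt'⟩ := exists_lt_of_lt_csSup hSne hr'
    exact le_trans (measure_mono (closedBall_subset_closedBall hlt'.le)) hr''S
  exact ⟨hSbdd, ball_closedBall_aux μ x hsph hlt⟩

lemma cdf_upper (x : α) (hsph : ∀ r : ℝ, μ (sphere x r) = 0) (c : ℝ≥0∞) :
    μ {y | μ (closedBall x (dist x y)) ≤ c} ≤ c := by
  rcases lt_or_ge c 1 with hc | hc
  · obtain ⟨hSbdd, hRc⟩ := cdf_sSup_props μ x hsph hc
    refine le_trans (measure_mono ?_) hRc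
    intro y hy
    simp only [Set.mem_setOf_eq] at hy
    have := le_csSup hSbdd hy
    simpa [mem_closedBall, dist_comm] using this
  · exact le_trans (le_trans (measure_mono (Set.subset_univ _)) (le_of_eq measure_univ)) hc

lemma cdf_lower (x : α) (hsph : ∀ r : ℝ, μ (sphere x r) = 0)
    {u : ℝ≥0∞} (hu : u < 1) :
    u ≤ μ {y | μ (closedBall x (dist x y)) ≤ u} := by
  obtain ⟨hSbdd, hRc⟩ := cdf_sSup_props μ x hsph hu
  set S : Set ℝ := {r | μ (closedBall x r) ≤ u} with hS
  set R := sSup S with hR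
  have hub : u ≤ μ (closedBall x R) := by
    have hiInter : (⋂ k : ℕ, closedBall x (R + 1 / (k + 1))) = closedBall x R := by
      ext y
      simp only [Set.mem_iInter, mem_closedBall]
      constructor
      · intro h
        by_contra hcon
        push_neg at hcon
        obtain ⟨k, hk⟩ := exists_nat_one_div_lt (sub_pos.2 hcon)
        exact absurd (h k) (by push_neg; linarith)
      · intro h k
        have : (0:ℝ) < 1 / ((k:ℝ) + 1) := by positivity
        linarith
    have hanti : Antitone (fun k : ℕ => closedBall x (R + 1 / (k + 1))) := by
      intro a b hab
      apply closedBall_subset_closedBall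
      have : (1:ℝ) / ((b:ℝ) + 1) ≤ 1 / ((a:ℝ) + 1) := by
        apply one_div_le_one_div_of_le (by positivity)
        exact_mod_cast by omega
      linarith
    have htend := tendsto_measure_iInter_atTop (μ := μ)
      (fun k => (measurableSet_closedBall).nullMeasurableSet) hanti
      ⟨0, measure_ne_top μ _⟩
    rw [hiInter] at htend
    refine ge_of_tendsto htend (Eventually.of_forall fun k => ?_)
    have hnot : R + 1 / ((k:ℝ) + 1) ∉ S := by
      intro hmem
      have := le_csSup hSbdd hmem
      have hpos : (0:ℝ) < 1 / ((k:ℝ) + 1) := by positivity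
      rw [← hR] at this
      linarith
    simp only [hS, Set.mem_setOf_eq, not_le] at hnot
    exact hnot.le
  refine le_trans hub (measure_mono ?_)
  intro y hy
  simp only [mem_closedBall] at hy
  simp only [Set.mem_setOf_eq]
  refine le_trans (measure_mono (closedBall_subset_closedBall ?_)) hRc
  rwa [dist_comm]

end MeasAux

section MeasAux2

variable {α : Type*} [MetricSpace α] [MeasurableSpace α] [OpensMeasurableSpace α]
  [SecondCountableTopology α]

lemma measurable_mball (μ : Measure α) [SFinite μ] :
    Measurable (fun p : α × ℝ => μ (closedBall p.1 p.2)) := by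
  have hs : MeasurableSet {q : (α × ℝ) × α | dist q.2 q.1.1 ≤ q.1.2} := by
    apply isClosed_le (by fun_prop) (by fun_prop) |>.measurableSet
  have h := measurable_measure_prodMk_left (ν := μ) hs
  have h2 : ∀ p : α × ℝ, Prod.mk p ⁻¹' {q : (α × ℝ) × α | dist q.2 q.1.1 ≤ q.1.2}
      = closedBall p.1 p.2 := by
    intro p
    ext y
    simp [mem_closedBall]
  simp_rw [h2] at h
  exact h

lemma measurable_finset_inf' {ι γ : Type*} [MeasurableSpace γ] (s : Finset ι)
    (hs : s.Nonempty) (f : ι → γ → ℝ) (hf : ∀ i, Measurable (f i)) :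
    Measurable (fun a => s.inf' hs (fun i => f i a)) := by
  induction hs using Finset.Nonempty.cons_induction with
  | singleton i => simpa using hf i
  | cons i s his hs ih =>
      have : (fun a => (Finset.cons i s his).inf' (Finset.cons_nonempty his)
          (fun j => f j a)) = fun a => min (f i a) (s.inf' hs (fun j => f j a)) := by
        funext a
        rw [Finset.inf'_cons]
      rw [this]
      exact (hf i).min ih

lemma integral_one_sub_pow (m : ℕ) :
    ∫ u in Set.Ioc (0:ℝ) 1, (1 - u) ^ m = 1 / (m + 1) := by
  rw [← intervalIntegral.integral_of_le zero_le_one]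
  have h1 : ∫ u in (0:ℝ)..1, (1 - u) ^ m = ∫ u in (0:ℝ)..1, u ^ m := by
    have := intervalIntegral.integral_comp_sub_left (a := (0:ℝ)) (b := 1)
      (fun u => u ^ m) 1
    simpa using this
  rw [h1, integral_pow]
  simp

lemma exp_neg_le_of_pos {x : ℝ} (hx : 0 < x) : Real.exp (-x) ≤ 120 / x ^ 5 := by
  have h5 : x ^ 5 / 120 ≤ Real.exp x := by
    have := Real.sum_le_exp_of_nonneg hx.le 6
    have hterm : x ^ 5 / 120 ≤ ∑ i ∈ Finset.range 6, x ^ i / i.factorial := by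
      have : ∀ i ∈ Finset.range 6, (0:ℝ) ≤ x ^ i / i.factorial := by
        intro i _
        positivity
      have h5mem : (5:ℕ) ∈ Finset.range 6 := by decide
      calc x ^ 5 / 120 = x ^ 5 / (5:ℕ).factorial := by norm_num [Nat.factorial]
        _ ≤ ∑ i ∈ Finset.range 6, x ^ i / i.factorial :=
            Finset.single_le_sum this h5mem
    linarith
  rw [le_div_iff₀ (by positivity)]
  have hprod : Real.exp (-x) * Real.exp x = 1 := by
    rw [← Real.exp_add]; simp
  have hkey : (0:ℝ) ≤ Real.exp (-x) * (120 * Real.exp x - x ^ 5) :=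
    mul_nonneg (Real.exp_pos (-x)).le (by linarith)
  nlinarith [hkey, hprod]

lemma integrableOn_exp_neg_rpow :
    IntegrableOn (fun s : ℝ => Real.exp (-(s ^ ((1:ℝ)/4)))) (Set.Ioi (0:ℝ)) := by
  have hmeas : AEStronglyMeasurable (fun s : ℝ => Real.exp (-(s ^ ((1:ℝ)/4))))
      (volume.restrict (Set.Ioi (0:ℝ))) := by
    apply ContinuousOn.aestronglyMeasurable _ measurableSet_Ioi
    apply Real.continuous_exp.comp_continuousOn
    apply ContinuousOn.neg
    exact (continuousOn_id (s := Set.Ioi (0:ℝ))).rpow_const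
      (fun x hx => Or.inl (ne_of_gt hx))
  have hsplit : Set.Ioi (0:ℝ) = Set.Ioc (0:ℝ) 1 ∪ Set.Ioi (1:ℝ) :=
    (Set.Ioc_union_Ioi_eq_Ioi zero_le_one).symm
  rw [hsplit]
  apply IntegrableOn.union
  · -- bounded by 1 on Ioc 0 1
    apply Integrable.mono (g := fun _ : ℝ => (1:ℝ))
    · exact integrableOn_const (by simp) (by simp)
    · exact hmeas.mono_measure (Measure.restrict_mono (by rw [hsplit]; exact Set.subset_union_left) le_rfl)
    · filter_upwards [ae_restrict_mem measurableSet_Ioc] with s hs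
      have h0 : (0:ℝ) ≤ s ^ ((1:ℝ)/4) := Real.rpow_nonneg hs.1.le _
      rw [Real.norm_eq_abs, abs_of_pos (Real.exp_pos _), norm_one]
      calc Real.exp (-(s ^ ((1:ℝ)/4))) ≤ Real.exp 0 := Real.exp_le_exp.2 (by linarith)
        _ = 1 := Real.exp_zero
  · -- bounded by 120 * s ^ (-(5/4))
    apply Integrable.mono (g := fun s : ℝ => 120 * s ^ (-(5/4) : ℝ))
    · exact (integrableOn_Ioi_rpow_of_lt (by norm_num) one_pos).const_mul 120
    · exact hmeas.mono_measure (Measure.restrict_mono (by rw [hsplit]; exact Set.subset_union_right) le_rfl)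
    · filter_upwards [ae_restrict_mem measurableSet_Ioi] with s hs
      have hs0 : (0:ℝ) < s := lt_trans one_pos hs
      have hx : (0:ℝ) < s ^ ((1:ℝ)/4) := Real.rpow_pos_of_pos hs0 _
      have key : Real.exp (-(s ^ ((1:ℝ)/4))) ≤ 120 / (s ^ ((1:ℝ)/4)) ^ 5 :=
        exp_neg_le_of_pos hx
      have hpow : (s ^ ((1:ℝ)/4)) ^ (5:ℕ) = s ^ ((5:ℝ)/4) := by
        rw [← Real.rpow_natCast (s ^ ((1:ℝ)/4)) 5, ← Real.rpow_mul hs0.le]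
        norm_num
      rw [Real.norm_eq_abs, abs_of_pos (Real.exp_pos _), Real.norm_eq_abs]
      have hrpos : (0:ℝ) < s ^ (-(5/4) : ℝ) := Real.rpow_pos_of_pos hs0 _
      rw [abs_of_pos (by positivity)]
      calc Real.exp (-(s ^ ((1:ℝ)/4))) ≤ 120 / s ^ ((5:ℝ)/4) := by rw [← hpow]; exact key
        _ = 120 * s ^ (-(5/4) : ℝ) := by
            rw [Real.rpow_neg hs0.le, div_eq_mul_inv]

end MeasAux2

lemma densMeasure_sphere {d : ℕ} (hd : 1 ≤ d) (f : EuclideanSpace ℝ (Fin d) → ℝ)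
    (x : EuclideanSpace ℝ (Fin d)) (r : ℝ) : densMeasure d f (sphere x r) = 0 := by
  haveI : Nonempty (Fin d) := ⟨⟨0, hd⟩⟩
  haveI : Nontrivial (EuclideanSpace ℝ (Fin d)) := inferInstance
  have hvol : (volume : Measure (EuclideanSpace ℝ (Fin d))) (sphere x r) = 0 :=
    Measure.addHaar_sphere volume x r
  exact measure_mono_null (le_refl _) ((withDensity_absolutelyContinuous volume _) hvol)

lemma densMeasure_isProb {d : ℕ} (f : EuclideanSpace ℝ (Fin d) → ℝ)
    (hf_meas : Measurable f) (hf_nonneg : ∀ x, 0 ≤ f x) (hf_prob : ∫ x, f x = 1) :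
    IsProbabilityMeasure (densMeasure d f) := by
  have hint : Integrable f := by
    by_contra h
    rw [integral_undef h] at hf_prob
    exact one_ne_zero hf_prob.symm
  constructor
  rw [densMeasure, withDensity_apply _ MeasurableSet.univ, Measure.restrict_univ,
    ← ofReal_integral_eq_lintegral_ofReal hint (Eventually.of_forall hf_nonneg), hf_prob]
  simp

lemma iid_map_pi {Ω : Type*} [MeasurableSpace Ω] (P : Measure Ω) [IsProbabilityMeasure P]
    {E : Type*} [MeasurableSpace E] (μ : Measure E) (X : ℕ → Ω → E)
    (hX_meas : ∀ i, Measurable (X i))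
    (hX_indep : iIndepFun X P)
    (hX_law : ∀ i, Measure.map (X i) P = μ) (N : ℕ) :
    Measure.map (fun ω (j : Fin N) => X (j : ℕ) ω) P = Measure.pi (fun _ => μ) := by
  haveI : IsProbabilityMeasure μ :=
    (hX_law 0) ▸ Measure.isProbabilityMeasure_map (hX_meas 0).aemeasurable
  have hvec : Measurable (fun ω (j : Fin N) => X (j : ℕ) ω) :=
    measurable_pi_lambda _ (fun j => hX_meas j)
  refine (Measure.pi_eq fun s hs => ?_).symm
  rw [Measure.map_apply hvec (MeasurableSet.univ_pi hs)]
  classical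
  set t : ℕ → Set Ω := fun i => if h : i < N then X i ⁻¹' s ⟨i, h⟩ else Set.univ with ht
  have hpre : (fun ω (j : Fin N) => X (j : ℕ) ω) ⁻¹' Set.pi Set.univ s
      = ⋂ i ∈ Finset.range N, t i := by
    ext ω
    simp only [Set.mem_preimage, Set.mem_pi, Set.mem_univ, forall_true_left, Set.mem_iInter,
      Finset.mem_range, ht]
    constructor
    · intro h i hi
      rw [dif_pos hi]
      exact h ⟨i, hi⟩
    · intro h j
      have := h (j : ℕ) j.isLt
      rw [dif_pos j.isLt] at this
      exact this
  rw [hpre, hX_indep.meas_biInter (fun i hi => ?_)]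
  · rw [← Fin.prod_univ_eq_prod_range (fun i => P (t i)) N]
    apply Finset.prod_congr rfl
    intro j _
    have htj : t (j : ℕ) = X (j : ℕ) ⁻¹' s j := by
      rw [ht]
      simp only [dif_pos j.isLt]
    rw [htj, ← hX_law (j : ℕ), Measure.map_apply (hX_meas _) (hs j)]
  · rw [Finset.mem_range] at hi
    exact ⟨s ⟨i, hi⟩, hs _, by rw [ht]; simp only [dif_pos hi]⟩

section Core

variable {E : Type*} [MetricSpace E] [MeasurableSpace E] [OpensMeasurableSpace E]
  [SecondCountableTopology E]

def dmin2 (m : ℕ) (x0 : E) (v : Fin (m + 1) → E) : ℝ :=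
  Finset.univ.inf' ⟨0, Finset.mem_univ 0⟩ (fun j => dist x0 (v j))

def dminw (m : ℕ) (w : Fin (m + 2) → E) : ℝ :=
  dmin2 m (w 0) (fun j => w j.succ)

def gtwo (μ : Measure E) (m : ℕ) (p : E × (Fin (m + 2) → E)) : ℝ :=
  Real.log ((μ (closedBall (p.2 0) (dminw m p.2))).toReal /
    (μ (closedBall (p.2 0) (min (dminw m p.2) (dist (p.2 0) p.1)))).toReal)

lemma measurable_dmin2 (m : ℕ) :
    Measurable (fun q : E × (Fin (m + 1) → E) => dmin2 m q.1 q.2) := by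
  apply measurable_finset_inf' Finset.univ ⟨0, Finset.mem_univ 0⟩
    (fun j (q : E × (Fin (m + 1) → E)) => dist q.1 (q.2 j))
  intro j
  exact (continuous_fst.dist ((continuous_apply j).comp continuous_snd)).measurable

lemma measurable_dminw (m : ℕ) :
    Measurable (fun w : Fin (m + 2) → E => dminw m w) := by
  have h : (fun w : Fin (m + 2) → E => dminw m w)
      = (fun q : E × (Fin (m + 1) → E) => dmin2 m q.1 q.2) ∘
        (fun w => (w 0, fun j => w j.succ)) := rfl
  rw [h]
  exact (measurable_dmin2 m).comp
    ((measurable_pi_apply 0).prodMk (measurable_pi_lambda _ fun j => measurable_pi_apply _))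

lemma measurable_gtwo (μ : Measure E) [SFinite μ] (m : ℕ) :
    Measurable (gtwo μ m) := by
  have h0 : Measurable (fun p : E × (Fin (m + 2) → E) => p.2 0) :=
    (measurable_pi_apply 0).comp measurable_snd
  have hdw : Measurable (fun p : E × (Fin (m + 2) → E) => dminw m p.2) :=
    (measurable_dminw m).comp measurable_snd
  have hZ : Measurable (fun p : E × (Fin (m + 2) → E) =>
      (μ (closedBall (p.2 0) (dminw m p.2))).toReal) :=
    ((measurable_mball μ).comp (h0.prodMk hdw)).ennreal_toReal
  have hY : Measurable (fun p : E × (Fin (m + 2) → E) =>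
      (μ (closedBall (p.2 0) (min (dminw m p.2) (dist (p.2 0) p.1)))).toReal) :=
    ((measurable_mball μ).comp
      (h0.prodMk (hdw.min (h0.dist measurable_fst)))).ennreal_toReal
  exact Real.measurable_log.comp (hZ.div hY)

lemma gtwo_nonneg (μ : Measure E) [IsProbabilityMeasure μ] (m : ℕ)
    (p : E × (Fin (m + 2) → E)) : 0 ≤ gtwo μ m p := by
  unfold gtwo
  set Ztr := (μ (closedBall (p.2 0) (dminw m p.2))).toReal
  set Ytr := (μ (closedBall (p.2 0) (min (dminw m p.2) (dist (p.2 0) p.1)))).toReal with hYtr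
  have hY0 : 0 ≤ Ytr := ENNReal.toReal_nonneg
  have hYZ : Ytr ≤ Ztr := by
    apply ENNReal.toReal_mono (measure_ne_top μ _)
    exact measure_mono (closedBall_subset_closedBall (min_le_left _ _))
  rcases hY0.eq_or_lt with h0 | hpos
  · rw [← h0, div_zero, Real.log_zero]
  · exact Real.log_nonneg ((one_le_div hpos).2 hYZ)

lemma inner_bound (μ : Measure E) [IsProbabilityMeasure μ]
    (hsph : ∀ (x : E) (r : ℝ), μ (sphere x r) = 0) (m : ℕ) {t : ℝ} (ht : 0 < t)
    (w : Fin (m + 2) → E) :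
    μ {y | t < gtwo μ m (y, w)} ≤
      ENNReal.ofReal (Real.exp (-t)) * μ (closedBall (w 0) (dminw m w)) := by
  set x0 := w 0 with hx0
  set Rb := dminw m w with hRb
  set Z := μ (closedBall x0 Rb) with hZ
  set Ztr := Z.toReal with hZtr
  have hZtr_nonneg : 0 ≤ Ztr := ENNReal.toReal_nonneg
  have hsub : {y | t < gtwo μ m (y, w)} ⊆
      {y | μ (closedBall x0 (dist x0 y)) ≤ ENNReal.ofReal (Real.exp (-t) * Ztr)} := by
    intro y hy
    simp only [Set.mem_setOf_eq] at hy ⊢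
    have hy' : t < Real.log (Ztr / (μ (closedBall x0 (min Rb (dist x0 y)))).toReal) := hy
    set Ytr := (μ (closedBall x0 (min Rb (dist x0 y)))).toReal with hYtr
    have hY0 : 0 ≤ Ytr := ENNReal.toReal_nonneg
    have hYpos : 0 < Ytr := by
      rcases hY0.eq_or_lt with h0 | hpos
      · exfalso
        rw [← h0, div_zero, Real.log_zero] at hy'
        exact absurd hy' (not_lt.2 ht.le)
      · exact hpos
    have hZpos : 0 < Ztr := by
      by_contra hcon
      push_neg at hcon
      have : Ztr = 0 := le_antisymm hcon hZtr_nonneg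
      rw [this, zero_div, Real.log_zero] at hy'
      exact absurd hy' (not_lt.2 ht.le)
    have hratio : Real.exp t < Ztr / Ytr :=
      (Real.lt_log_iff_exp_lt (div_pos hZpos hYpos)).1 hy'
    have hmul : Real.exp t * Ytr < Ztr := (lt_div_iff₀ hYpos).1 hratio
    have hprod : Real.exp (-t) * Real.exp t = 1 := by
      rw [← Real.exp_add]; simp
    have hY : Ytr < Real.exp (-t) * Ztr := by
      nlinarith [Real.exp_pos (-t), hmul, hprod]
    rcases le_or_gt (dist x0 y) Rb with hDR | hDR
    · rw [min_eq_right hDR] at hYtr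
      rw [ENNReal.le_ofReal_iff_toReal_le (measure_ne_top μ _)
        (mul_nonneg (Real.exp_pos (-t)).le hZtr_nonneg)]
      rw [← hYtr]
      exact hY.le
    · exfalso
      rw [min_eq_left hDR.le] at hYtr
      have hexp : Real.exp (-t) < 1 := Real.exp_lt_one_iff.2 (by linarith)
      have : Ytr = Ztr := by rw [hYtr, hZtr, hZ]
      nlinarith [hY, hexp, hZpos, this]
  calc μ {y | t < gtwo μ m (y, w)}
      ≤ μ {y | μ (closedBall x0 (dist x0 y)) ≤ ENNReal.ofReal (Real.exp (-t) * Ztr)} :=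
        measure_mono hsub
    _ ≤ ENNReal.ofReal (Real.exp (-t) * Ztr) := cdf_upper μ x0 (hsph x0) _
    _ = ENNReal.ofReal (Real.exp (-t)) * Z := by
        rw [ENNReal.ofReal_mul (Real.exp_pos (-t)).le, hZtr,
          ENNReal.ofReal_toReal (measure_ne_top μ _)]

lemma zint_inner (μ : Measure E) [IsProbabilityMeasure μ]
    (hsph : ∀ (x : E) (r : ℝ), μ (sphere x r) = 0) (m : ℕ) (x0 : E) :
    ∫⁻ v, μ (closedBall x0 (dmin2 m x0 v)) ∂(Measure.pi fun _ : Fin (m + 1) => μ)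
      ≤ ENNReal.ofReal (1 / (m + 2)) := by
  set π : Measure (Fin (m + 1) → E) := Measure.pi fun _ => μ with hπ
  haveI : IsProbabilityMeasure π := by
    constructor
    rw [hπ, ← Set.pi_univ Set.univ, Measure.pi_pi]
    simp
  set F : (Fin (m + 1) → E) → ℝ := fun v => (μ (closedBall x0 (dmin2 m x0 v))).toReal with hF
  have hFmeas : Measurable F := by
    apply Measurable.ennreal_toReal
    exact (measurable_mball μ).comp
      (measurable_const.prodMk ((measurable_dmin2 m).comp
        (measurable_const.prodMk measurable_id)))
  have hF1 : ∀ v, F v ≤ 1 := by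
    intro v
    rw [hF]
    calc (μ (closedBall x0 (dmin2 m x0 v))).toReal
        ≤ (μ Set.univ).toReal :=
          ENNReal.toReal_mono (measure_ne_top μ _) (measure_mono (Set.subset_univ _))
      _ = 1 := by simp
  have heq : ∀ v, μ (closedBall x0 (dmin2 m x0 v)) = ENNReal.ofReal (F v) := fun v =>
    (ENNReal.ofReal_toReal (measure_ne_top μ _)).symm
  calc ∫⁻ v, μ (closedBall x0 (dmin2 m x0 v)) ∂π
      = ∫⁻ v, ENNReal.ofReal (F v) ∂π := by
        apply lintegral_congr
        exact heq
    _ = ∫⁻ u in Set.Ioi (0:ℝ), π {v | u < F v} := by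
        exact lintegral_eq_lintegral_meas_lt π
          (Eventually.of_forall fun v => ENNReal.toReal_nonneg) hFmeas.aemeasurable
    _ ≤ ∫⁻ u in Set.Ioi (0:ℝ),
          (Set.Ioc (0:ℝ) 1).indicator (fun u => ENNReal.ofReal ((1 - u) ^ (m + 1))) u := by
        apply lintegral_mono_ae
        filter_upwards [ae_restrict_mem measurableSet_Ioi] with u hu
        rcases lt_or_ge u 1 with hu1 | hu1
        · rw [Set.indicator_of_mem (show u ∈ Set.Ioc (0:ℝ) 1 from ⟨hu, hu1.le⟩)]
          have hsub : {v | u < F v} ⊆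
              Set.pi Set.univ (fun _ : Fin (m + 1) =>
                {y : E | u < (μ (closedBall x0 (dist x0 y))).toReal}) := by
            intro v hv j _
            simp only [Set.mem_setOf_eq] at hv ⊢
            have hle : F v ≤ (μ (closedBall x0 (dist x0 (v j)))).toReal := by
              apply ENNReal.toReal_mono (measure_ne_top μ _)
              apply measure_mono
              apply closedBall_subset_closedBall
              exact Finset.inf'_le _ (Finset.mem_univ j)
            exact lt_of_lt_of_le hv hle
          have hSc_meas : MeasurableSet
              {y : E | μ (closedBall x0 (dist x0 y)) ≤ ENNReal.ofReal u} := by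
            have : Measurable (fun y : E => μ (closedBall x0 (dist x0 y))) :=
              (measurable_mball μ).comp
                (measurable_const.prodMk (measurable_const.dist measurable_id))
            exact this measurableSet_Iic
          have hcompl : {y : E | u < (μ (closedBall x0 (dist x0 y))).toReal}
              = {y : E | μ (closedBall x0 (dist x0 y)) ≤ ENNReal.ofReal u}ᶜ := by
            ext y
            simp only [Set.mem_setOf_eq, Set.mem_compl_iff, not_le]
            exact (ENNReal.ofReal_lt_iff_lt_toReal (le_of_lt hu) (measure_ne_top μ _)).symm
          have hmu : μ {y : E | u < (μ (closedBall x0 (dist x0 y))).toReal}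
              ≤ ENNReal.ofReal (1 - u) := by
            rw [hcompl, measure_compl hSc_meas (measure_ne_top μ _), measure_univ]
            have hlow : ENNReal.ofReal u ≤
                μ {y : E | μ (closedBall x0 (dist x0 y)) ≤ ENNReal.ofReal u} :=
              cdf_lower μ x0 (hsph x0) (by
                rw [← ENNReal.ofReal_one]
                exact (ENNReal.ofReal_lt_ofReal_iff one_pos).2 hu1)
            calc (1 : ℝ≥0∞) - μ {y | μ (closedBall x0 (dist x0 y)) ≤ ENNReal.ofReal u}
                ≤ 1 - ENNReal.ofReal u := tsub_le_tsub_left hlow 1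
              _ = ENNReal.ofReal (1 - u) := by
                  rw [ENNReal.ofReal_sub 1 (le_of_lt hu), ENNReal.ofReal_one]
          calc π {v | u < F v}
              ≤ π (Set.pi Set.univ (fun _ : Fin (m + 1) =>
                  {y : E | u < (μ (closedBall x0 (dist x0 y))).toReal})) :=
                measure_mono hsub
            _ = (μ {y : E | u < (μ (closedBall x0 (dist x0 y))).toReal}) ^ (m + 1) := by
                rw [hπ, Measure.pi_pi]
                rw [Finset.prod_const, Finset.card_univ, Fintype.card_fin]
            _ ≤ (ENNReal.ofReal (1 - u)) ^ (m + 1) := pow_le_pow_left' hmu _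
            _ = ENNReal.ofReal ((1 - u) ^ (m + 1)) := by
                rw [← ENNReal.ofReal_pow (by linarith)]
        · have hempty : {v | u < F v} = ∅ := by
            ext v
            simp only [Set.mem_setOf_eq, Set.mem_empty_iff_false, iff_false, not_lt]
            exact le_trans (hF1 v) hu1
          rw [hempty]
          simp
    _ = ∫⁻ u in Set.Ioc (0:ℝ) 1, ENNReal.ofReal ((1 - u) ^ (m + 1)) := by
        rw [lintegral_indicator measurableSet_Ioc, Measure.restrict_restrict measurableSet_Ioc,
          Set.inter_eq_self_of_subset_left (fun x hx => hx.1)]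
    _ = ENNReal.ofReal (∫ u in Set.Ioc (0:ℝ) 1, (1 - u) ^ (m + 1)) := by
        rw [← ofReal_integral_eq_lintegral_ofReal]
        · apply Continuous.integrableOn_Ioc
          exact (continuous_const.sub continuous_id).pow _
        · filter_upwards [ae_restrict_mem measurableSet_Ioc] with u hu
          have h1u : (0:ℝ) ≤ 1 - u := by linarith [hu.2]
          exact pow_nonneg h1u _
    _ = ENNReal.ofReal (1 / (m + 2)) := by
        rw [integral_one_sub_pow (m + 1)]
        congr 1
        push_cast
        ring

/-- sInf of the range of a function on a nonempty fintype equals Finset.inf'. -/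
lemma sInf_range_eq_inf' {ι : Type*} [Fintype ι] (hne : Nonempty ι) (f : ι → ℝ) :
    sInf (Set.range f) = Finset.univ.inf' (Finset.univ_nonempty (α := ι)) f := by
  classical
  rw [← Set.image_univ, ← Finset.coe_univ, ← Finset.coe_image,
    Finset.Nonempty.csInf_eq_min' (by simpa using Finset.univ_nonempty (α := ι))]
  rw [Finset.min'_eq_inf']
  rw [Finset.inf'_image]
  rfl

lemma zint_bound (μ : Measure E) [IsProbabilityMeasure μ]
    (hsph : ∀ (x : E) (r : ℝ), μ (sphere x r) = 0) (m : ℕ) :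
    ∫⁻ w, μ (closedBall (w 0) (dminw m w)) ∂(Measure.pi fun _ : Fin (m + 2) => μ)
      ≤ ENNReal.ofReal (1 / (m + 2)) := by
  set π' : Measure (Fin (m + 1) → E) := Measure.pi fun _ => μ with hπ'
  have hmp := measurePreserving_piFinSuccAbove (fun _ : Fin (m + 2) => μ) 0
  have hZmeas : Measurable (fun w : Fin (m + 2) → E => μ (closedBall (w 0) (dminw m w))) :=
    (measurable_mball μ).comp ((measurable_pi_apply 0).prodMk (measurable_dminw m))
  have hcomp := (hmp.symm).lintegral_comp hZmeas
  rw [← hcomp]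
  have hpt : ∀ p : E × (Fin (m + 1) → E),
      μ (closedBall (((MeasurableEquiv.piFinSuccAbove (fun _ : Fin (m + 2) => E) 0).symm p) 0)
        (dminw m ((MeasurableEquiv.piFinSuccAbove (fun _ : Fin (m + 2) => E) 0).symm p)))
      = μ (closedBall p.1 (dmin2 m p.1 p.2)) := by
    rintro ⟨x0, v⟩
    have h1 : (MeasurableEquiv.piFinSuccAbove (fun _ : Fin (m + 2) => E) 0).symm (x0, v)
        = Fin.insertNth 0 x0 v := rfl
    rw [h1]
    have h2 : Fin.insertNth (α := fun _ : Fin (m + 2) => E) 0 x0 v 0 = x0 := by simp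
    have h3 : (fun j : Fin (m + 1) =>
        Fin.insertNth (α := fun _ : Fin (m + 2) => E) 0 x0 v j.succ) = v := by
      funext j
      rw [← Fin.zero_succAbove j, Fin.insertNth_apply_succAbove]
    rw [dminw, h2, h3]
  calc ∫⁻ p, μ (closedBall (((MeasurableEquiv.piFinSuccAbove (fun _ : Fin (m + 2) => E) 0).symm p) 0)
        (dminw m ((MeasurableEquiv.piFinSuccAbove (fun _ : Fin (m + 2) => E) 0).symm p)))
        ∂(μ.prod π')
      = ∫⁻ p, μ (closedBall p.1 (dmin2 m p.1 p.2)) ∂(μ.prod π') := lintegral_congr hpt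
    _ = ∫⁻ x0, ∫⁻ v, μ (closedBall x0 (dmin2 m x0 v)) ∂π' ∂μ := by
        apply lintegral_prod
        exact ((measurable_mball μ).comp
          (measurable_fst.prodMk (measurable_dmin2 m))).aemeasurable
    _ ≤ ∫⁻ _, ENNReal.ofReal (1 / (m + 2)) ∂μ :=
        lintegral_mono fun x0 => zint_inner μ hsph m x0
    _ = ENNReal.ofReal (1 / (m + 2)) := by
        rw [lintegral_const, measure_univ, mul_one]

lemma key_bound (μ : Measure E) [IsProbabilityMeasure μ]
    (hsph : ∀ (x : E) (r : ℝ), μ (sphere x r) = 0) (m : ℕ) {t : ℝ} (ht : 0 < t) :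
    (μ.prod (Measure.pi fun _ : Fin (m + 2) => μ)) {p | t < gtwo μ m p}
      ≤ ENNReal.ofReal (Real.exp (-t)) * ENNReal.ofReal (1 / (m + 2)) := by
  set π : Measure (Fin (m + 2) → E) := Measure.pi fun _ => μ with hπ
  have hset : MeasurableSet {p : E × (Fin (m + 2) → E) | t < gtwo μ m p} :=
    measurableSet_lt measurable_const (measurable_gtwo μ m)
  rw [Measure.prod_apply_symm hset]
  calc ∫⁻ w, μ ((fun y => (y, w)) ⁻¹' {p | t < gtwo μ m p}) ∂π
      ≤ ∫⁻ w, ENNReal.ofReal (Real.exp (-t)) * μ (closedBall (w 0) (dminw m w)) ∂π := by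
        apply lintegral_mono
        intro w
        exact inner_bound μ hsph m ht w
    _ = ENNReal.ofReal (Real.exp (-t)) * ∫⁻ w, μ (closedBall (w 0) (dminw m w)) ∂π :=
        lintegral_const_mul' _ _ ENNReal.ofReal_ne_top
    _ ≤ ENNReal.ofReal (Real.exp (-t)) * ENNReal.ofReal (1 / (m + 2)) :=
        mul_le_mul_right (zint_bound μ hsph m) _


lemma nn_eq_one (m : ℕ) (x : ℕ → E) :
    sInf ((fun j => dist (x 0) (x j)) '' {j | j < m + 2 ∧ j ≠ 0})
      = dminw m (fun j : Fin (m + 2) => x (j : ℕ)) := by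
  have himg : (fun j : ℕ => dist (x 0) (x j)) '' {j | j < m + 2 ∧ j ≠ 0}
      = Set.range (fun j : Fin (m + 1) => dist (x 0) (x ((j : ℕ) + 1))) := by
    ext r
    simp only [Set.mem_image, Set.mem_setOf_eq, Set.mem_range]
    constructor
    · rintro ⟨j, ⟨hj2, hj0⟩, rfl⟩
      refine ⟨⟨j - 1, by omega⟩, ?_⟩
      simp only [Fin.val_mk]
      have hj : j - 1 + 1 = j := by omega
      rw [hj]
    · rintro ⟨j, rfl⟩
      exact ⟨(j : ℕ) + 1, ⟨by omega, by omega⟩, rfl⟩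
  haveI : Nonempty (Fin (m + 1)) := ⟨0⟩
  rw [himg, sInf_range_eq_inf' this]
  rfl

lemma nn_eq_two (m : ℕ) (x : ℕ → E) :
    sInf ((fun j => dist (x 0) (x j)) '' {j | j < m + 3 ∧ j ≠ 0})
      = min (dminw m (fun j : Fin (m + 2) => x (j : ℕ))) (dist (x 0) (x (m + 2))) := by
  have hset : {j : ℕ | j < m + 3 ∧ j ≠ 0} = insert (m + 2) {j : ℕ | j < m + 2 ∧ j ≠ 0} := by
    ext j
    simp only [Set.mem_setOf_eq, Set.mem_insert_iff]
    omega
  have hbdd : BddBelow ((fun j : ℕ => dist (x 0) (x j)) '' {j | j < m + 2 ∧ j ≠ 0}) := by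
    refine ⟨0, ?_⟩
    rintro r ⟨j, -, rfl⟩
    exact dist_nonneg
  have hne : ((fun j : ℕ => dist (x 0) (x j)) '' {j | j < m + 2 ∧ j ≠ 0}).Nonempty :=
    ⟨dist (x 0) (x 1), ⟨1, ⟨by omega, one_ne_zero⟩, rfl⟩⟩
  rw [hset, Set.image_insert_eq, csInf_insert hbdd hne, nn_eq_one m x, min_comm]


end Core

/-- For i.i.d. `X_1, …, X_n` (`n ≥ 3`) with density `f` and distribution `μ`, with
`R_{n,1}(X_1)` resp. `R_{n−1,1}(X_1)` the nearest-neighbor distance of `X_1` among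
`X_2, …, X_n` resp. `X_2, …, X_{n−1}`,
`(n−1)·E[(ln(μ(B(X_1,R_{n−1,1}(X_1)))/μ(B(X_1,R_{n,1}(X_1)))))^4] ≤ ∫_0^∞ e^{−s^{1/4}} ds`. -/
theorem log_ratio_nn_ball_fourth_moment_bound
    {d : ℕ} (hd : 1 ≤ d)
    (f : EuclideanSpace ℝ (Fin d) → ℝ)
    (hf_meas : Measurable f) (hf_nonneg : ∀ x, 0 ≤ f x)
    (hf_prob : ∫ x, f x = 1)
    {Ω : Type*} [MeasurableSpace Ω] (P : Measure Ω) [IsProbabilityMeasure P]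
    (X : ℕ → Ω → EuclideanSpace ℝ (Fin d))
    (hX_meas : ∀ i, Measurable (X i))
    (hX_indep : iIndepFun X P)
    (hX_law : ∀ i, Measure.map (X i) P = densMeasure d f)
    (n : ℕ) (hn : 3 ≤ n) :
    ((n - 1 : ℕ) : ℝ≥0∞) *
        ∫⁻ ω, ENNReal.ofReal
          ((Real.log
              ((densMeasure d f
                  (closedBall (X 0 ω) (nnDist X (n - 1) 0 (X 0 ω) ω))).toReal /
                (densMeasure d f
                  (closedBall (X 0 ω) (nnDist X n 0 (X 0 ω) ω))).toReal)) ^ 4) ∂P ≤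
      ENNReal.ofReal (∫ s in Set.Ioi (0 : ℝ), Real.exp (-(s ^ ((1 : ℝ) / 4)))) := by
  obtain ⟨m, rfl⟩ : ∃ m, n = m + 3 := ⟨n - 3, by omega⟩
  set μ : Measure (EuclideanSpace ℝ (Fin d)) := densMeasure d f with hμ
  haveI hprob : IsProbabilityMeasure μ := densMeasure_isProb f hf_meas hf_nonneg hf_prob
  have hsph : ∀ (x : EuclideanSpace ℝ (Fin d)) (r : ℝ), μ (sphere x r) = 0 :=
    fun x r => densMeasure_sphere hd f x r
  set vec : Ω → (Fin (m + 3) → EuclideanSpace ℝ (Fin d)) := fun ω j => X (j : ℕ) ω with hvec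
  have hvec_meas : Measurable vec := measurable_pi_lambda _ (fun j => hX_meas j)
  have hvec_law : Measure.map vec P = Measure.pi (fun _ : Fin (m + 3) => μ) :=
    iid_map_pi P μ X hX_meas hX_indep hX_law (m + 3)
  set eL := MeasurableEquiv.piFinSuccAbove
    (fun _ : Fin (m + 3) => EuclideanSpace ℝ (Fin d)) (Fin.last (m + 2)) with heL
  set Φ : Ω → EuclideanSpace ℝ (Fin d) × (Fin (m + 2) → EuclideanSpace ℝ (Fin d)) :=
    fun ω => eL (vec ω) with hΦ
  have hΦ_meas : Measurable Φ := eL.measurable.comp hvec_meas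
  have hΦ_law : Measure.map Φ P = μ.prod (Measure.pi fun _ : Fin (m + 2) => μ) := by
    have h1 : Φ = eL ∘ vec := rfl
    rw [h1, ← Measure.map_map eL.measurable hvec_meas, hvec_law,
      (measurePreserving_piFinSuccAbove (fun _ : Fin (m + 3) => μ) (Fin.last (m + 2))).map_eq]
  have hΦeq : ∀ ω, Φ ω = (X (m + 2) ω, fun j : Fin (m + 2) => X (j : ℕ) ω) := by
    intro ω
    have h1 : Φ ω = (vec ω (Fin.last (m + 2)),
        fun j : Fin (m + 2) => vec ω ((Fin.last (m + 2)).succAbove j)) := rfl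
    rw [h1]
    congr 1
    funext j
    rw [Fin.succAbove_last]
    rfl
  have hTeq : ∀ ω, Real.log
      ((μ (closedBall (X 0 ω) (nnDist X (m + 3 - 1) 0 (X 0 ω) ω))).toReal /
        (μ (closedBall (X 0 ω) (nnDist X (m + 3) 0 (X 0 ω) ω))).toReal)
      = gtwo μ m (Φ ω) := by
    intro ω
    have h31 : m + 3 - 1 = m + 2 := rfl
    have e1 : nnDist X (m + 3 - 1) 0 (X 0 ω) ω
        = dminw m (fun j : Fin (m + 2) => X (j : ℕ) ω) := by
      rw [h31]
      exact nn_eq_one m (fun j => X j ω)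
    have e2 : nnDist X (m + 3) 0 (X 0 ω) ω
        = min (dminw m (fun j : Fin (m + 2) => X (j : ℕ) ω))
            (dist (X 0 ω) (X (m + 2) ω)) :=
      nn_eq_two m (fun j => X j ω)
    rw [e1, e2, hΦeq ω]
    rfl
  set T4 : Ω → ℝ := fun ω => (gtwo μ m (Φ ω)) ^ 4 with hT4
  have hT4meas : Measurable T4 := ((measurable_gtwo μ m).comp hΦ_meas).pow_const 4
  have hT4nonneg : ∀ ω, 0 ≤ T4 ω := fun ω => by positivity
  have hlhs : ∫⁻ ω, ENNReal.ofReal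
      ((Real.log
          ((μ (closedBall (X 0 ω) (nnDist X (m + 3 - 1) 0 (X 0 ω) ω))).toReal /
            (μ (closedBall (X 0 ω) (nnDist X (m + 3) 0 (X 0 ω) ω))).toReal)) ^ 4) ∂P
      = ∫⁻ ω, ENNReal.ofReal (T4 ω) ∂P := by
    apply lintegral_congr
    intro ω
    rw [hTeq ω]
  rw [hlhs]
  have hlayer : ∫⁻ ω, ENNReal.ofReal (T4 ω) ∂P
      = ∫⁻ s in Set.Ioi (0:ℝ), P {ω | s < T4 ω} :=
    lintegral_eq_lintegral_meas_lt P (Eventually.of_forall hT4nonneg) hT4meas.aemeasurable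
  have hcast : ((m + 3 - 1 : ℕ) : ℝ≥0∞) = ((m + 2 : ℕ) : ℝ≥0∞) := rfl
  rw [hcast, hlayer, ← lintegral_const_mul' _ _ (ENNReal.natCast_ne_top (m + 2))]
  have hkey : ∀ s : ℝ, s ∈ Set.Ioi (0:ℝ) →
      ((m + 2 : ℕ) : ℝ≥0∞) * P {ω | s < T4 ω}
        ≤ ENNReal.ofReal (Real.exp (-(s ^ ((1:ℝ)/4)))) := by
    intro s hs
    have hs0 : (0:ℝ) < s := hs
    have ht : 0 < s ^ ((1:ℝ)/4) := Real.rpow_pos_of_pos hs0 _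
    set t := s ^ ((1:ℝ)/4) with hts
    have ht4 : t ^ (4:ℕ) = s := by
      rw [hts, ← Real.rpow_natCast (s ^ ((1:ℝ)/4)) 4, ← Real.rpow_mul hs0.le]
      norm_num
    have hsub : {ω | s < T4 ω} ⊆ {ω | t < gtwo μ m (Φ ω)} := by
      intro ω hω
      simp only [Set.mem_setOf_eq] at hω ⊢
      by_contra hcon
      push_neg at hcon
      have hle : T4 ω ≤ s := by
        rw [← ht4]
        exact pow_le_pow_left₀ (gtwo_nonneg μ m (Φ ω)) hcon 4
      exact absurd hω (not_lt.2 hle)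
    have hmap : P {ω | t < gtwo μ m (Φ ω)}
        = (μ.prod (Measure.pi fun _ : Fin (m + 2) => μ)) {p | t < gtwo μ m p} := by
      rw [← hΦ_law, Measure.map_apply hΦ_meas
        (measurableSet_lt measurable_const (measurable_gtwo μ m))]
      rfl
    have hP : P {ω | s < T4 ω}
        ≤ ENNReal.ofReal (Real.exp (-t)) * ENNReal.ofReal (1 / (m + 2)) := by
      refine le_trans (measure_mono hsub) ?_
      rw [hmap]
      exact key_bound μ hsph m ht
    calc ((m + 2 : ℕ) : ℝ≥0∞) * P {ω | s < T4 ω}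
        ≤ ((m + 2 : ℕ) : ℝ≥0∞) *
            (ENNReal.ofReal (Real.exp (-t)) * ENNReal.ofReal (1 / (m + 2))) :=
          mul_le_mul_right hP _
      _ = ENNReal.ofReal (Real.exp (-t)) *
            (((m + 2 : ℕ) : ℝ≥0∞) * ENNReal.ofReal (1 / (m + 2))) := by ring
      _ = ENNReal.ofReal (Real.exp (-t)) := by
          have hone : ((m + 2 : ℕ) : ℝ≥0∞) * ENNReal.ofReal (1 / (m + 2)) = 1 := by
            rw [← ENNReal.ofReal_natCast (m + 2), ← ENNReal.ofReal_mul (by positivity)]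
            rw [show ((m + 2 : ℕ) : ℝ) * (1 / ((m : ℝ) + 2)) = 1 by
              push_cast
              field_simp]
            exact ENNReal.ofReal_one
          rw [hone, mul_one]
  calc ∫⁻ s in Set.Ioi (0:ℝ), ((m + 2 : ℕ) : ℝ≥0∞) * P {ω | s < T4 ω}
      ≤ ∫⁻ s in Set.Ioi (0:ℝ), ENNReal.ofReal (Real.exp (-(s ^ ((1:ℝ)/4)))) := by
        apply lintegral_mono_ae
        filter_upwards [ae_restrict_mem measurableSet_Ioi] with s hs
        exact hkey s hs
    _ = ENNReal.ofReal (∫ s in Set.Ioi (0:ℝ), Real.exp (-(s ^ ((1:ℝ)/4)))) :=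
        (ofReal_integral_eq_lintegral_ofReal integrableOn_exp_neg_rpow
          (Eventually.of_forall fun s => (Real.exp_pos _).le)).symm
end
end

section
/- Let X, X_1, X_2, … be i.i.d. random vectors in ℝ^d with a density f. If E[(ln ‖X‖)^+] = ∞, then for every n ≥ 2, E[(ln R_{n,1}(X_1))^+] = ∞, where R_{n,1}(X_1) = min_{2 ≤ j ≤ n} ‖X_1 − X_j‖. -/
open MeasureTheory ProbabilityTheory Filter Metric
open scoped ENNReal

noncomputable section

/-- If `E[(ln ‖X‖)^+] = ∞`, then for every `n ≥ 2`, `E[(ln R_{n,1}(X_1))^+] = ∞`,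
where `R_{n,1}(X_1) = min_{2 ≤ j ≤ n} ‖X_1 − X_j‖` is the nearest-neighbor distance
of `X_1` among `X_2, …, X_n`. -/
theorem log_nn_dist_pos_part_infinite
    {d : ℕ} (hd : 1 ≤ d)
    (f : EuclideanSpace ℝ (Fin d) → ℝ)
    (hf_meas : Measurable f) (hf_nonneg : ∀ x, 0 ≤ f x)
    (hf_prob : ∫ x, f x = 1)
    {Ω : Type*} [MeasurableSpace Ω] (P : Measure Ω) [IsProbabilityMeasure P]
    (X : ℕ → Ω → EuclideanSpace ℝ (Fin d))
    (hX_meas : ∀ i, Measurable (X i))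
    (hX_indep : iIndepFun X P)
    (hX_law : ∀ i, Measure.map (X i) P = densMeasure d f)
    (hinf : ∫⁻ ω, ENNReal.ofReal (max (Real.log ‖X 0 ω‖) 0) ∂P = ⊤) :
    ∀ n, 2 ≤ n →
      ∫⁻ ω, ENNReal.ofReal (max (Real.log (nnDist X n 0 (X 0 ω) ω)) 0) ∂P = ⊤ := by
  classical
  intro n hn
  have hn0 : ((n : ℝ≥0∞)) ≠ 0 := by
    simp only [ne_eq, Nat.cast_eq_zero]; omega
  set ε : ℝ≥0∞ := (2 * (n : ℝ≥0∞))⁻¹ with hε_def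
  have hε_pos : 0 < ε := by
    rw [hε_def]
    refine ENNReal.inv_pos.2 ?_
    exact ENNReal.mul_ne_top ENNReal.ofNat_ne_top (ENNReal.natCast_ne_top n)
  -- choose M
  have hmeas_norm : ∀ (j : ℕ) (M : ℝ), MeasurableSet {ω | M < ‖X j ω‖} :=
    fun j M => measurableSet_lt measurable_const (hX_meas j).norm
  have htend : Tendsto (fun M : ℕ => P {ω | (M : ℝ) < ‖X 0 ω‖}) atTop (nhds 0) := by
    have h0 : (⋂ M : ℕ, {ω | (M : ℝ) < ‖X 0 ω‖}) = ∅ := by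
      ext ω
      simp only [Set.mem_iInter, Set.mem_setOf_eq, Set.mem_empty_iff_false, iff_false, not_forall,
        not_lt]
      obtain ⟨M, hM⟩ := exists_nat_gt ‖X 0 ω‖
      exact ⟨M, hM.le⟩
    have hmono : Antitone (fun M : ℕ => {ω | (M : ℝ) < ‖X 0 ω‖}) := by
      intro a b hab ω hω
      simp only [Set.mem_setOf_eq] at hω ⊢
      exact lt_of_le_of_lt (by exact_mod_cast hab) hω
    have := tendsto_measure_iInter_atTop (μ := P)
      (s := fun M : ℕ => {ω | (M : ℝ) < ‖X 0 ω‖})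
      (fun M => (hmeas_norm 0 M).nullMeasurableSet) hmono ⟨0, measure_ne_top _ _⟩
    rw [h0] at this
    simpa [Function.comp_def] using this
  obtain ⟨M₀, hq, hM₀1⟩ :
      ∃ M₀ : ℕ, P {ω | (M₀ : ℝ) < ‖X 0 ω‖} < ε ∧ 1 ≤ M₀ :=
    ((htend.eventually (Iio_mem_nhds hε_pos)).and (eventually_ge_atTop 1)).exists
  set M : ℝ := (M₀ : ℝ) with hM_def
  have hM1 : (1 : ℝ) ≤ M := by rw [hM_def]; exact_mod_cast hM₀1
  -- same law
  have hlaw : ∀ j : ℕ, P {ω | M < ‖X j ω‖} = P {ω | M < ‖X 0 ω‖} := by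
    intro j
    have hset : MeasurableSet {x : EuclideanSpace ℝ (Fin d) | M < ‖x‖} :=
      measurableSet_lt measurable_const measurable_norm
    have h1 : P {ω | M < ‖X j ω‖}
        = Measure.map (X j) P {x : EuclideanSpace ℝ (Fin d) | M < ‖x‖} := by
      rw [Measure.map_apply (hX_meas j) hset]; rfl
    have h2 : P {ω | M < ‖X 0 ω‖}
        = Measure.map (X 0) P {x : EuclideanSpace ℝ (Fin d) | M < ‖x‖} := by
      rw [Measure.map_apply (hX_meas 0) hset]; rfl
    rw [h1, h2, hX_law j, hX_law 0]
  set T : Finset ℕ := Finset.Ico 1 n with hT_def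
  set A : Set Ω := ⋂ j ∈ T, {ω | ‖X j ω‖ ≤ M} with hA_def
  have hA_meas : MeasurableSet A := by
    refine Set.Finite.measurableSet_biInter (Finset.finite_toSet T) ?_
    exact fun j _ => measurableSet_le (hX_meas j).norm measurable_const
  -- P Aᶜ ≤ 1/2
  have hAc : P Aᶜ ≤ 2⁻¹ := by
    have hAc_eq : Aᶜ = ⋃ j ∈ T, {ω | M < ‖X j ω‖} := by
      rw [hA_def, Set.compl_iInter₂]
      refine Set.iUnion₂_congr fun j _ => ?_
      ext ω; simp [not_le]
    rw [hAc_eq]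
    calc P (⋃ j ∈ T, {ω | M < ‖X j ω‖}) ≤ ∑ j ∈ T, P {ω | M < ‖X j ω‖} :=
          measure_biUnion_finset_le T _
      _ ≤ ∑ _j ∈ T, ε := by
          refine Finset.sum_le_sum fun j _ => ?_
          rw [hlaw j]; exact hq.le
      _ = T.card • ε := by rw [Finset.sum_const]
      _ ≤ n • ε := by
          refine nsmul_le_nsmul_left zero_le ?_
          rw [hT_def, Nat.card_Ico]; omega
      _ = (n : ℝ≥0∞) * (2 * (n : ℝ≥0∞))⁻¹ := by rw [nsmul_eq_mul, hε_def]
      _ = 2⁻¹ := by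
          rw [ENNReal.mul_inv (Or.inl two_ne_zero) (Or.inl ENNReal.ofNat_ne_top), ← mul_assoc,
            mul_comm (n : ℝ≥0∞) 2⁻¹, mul_assoc, ENNReal.mul_inv_cancel hn0
              (ENNReal.natCast_ne_top n), mul_one]
  have hApos : P A ≠ 0 := by
    intro h0
    have h1 : (1 : ℝ≥0∞) ≤ P A + P Aᶜ := by
      calc (1 : ℝ≥0∞) = P Set.univ := measure_univ.symm
        _ = P (A ∪ Aᶜ) := by rw [Set.union_compl_self]
        _ ≤ P A + P Aᶜ := measure_union_le _ _
    rw [h0, zero_add] at h1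
    have h2 : (1 : ℝ≥0∞) ≤ 2⁻¹ := h1.trans hAc
    norm_num at h2
  -- independence of X 0 and the tuple (X j)_{j ∈ T}
  have hST : Disjoint ({0} : Finset ℕ) T := by
    simp only [Finset.disjoint_left, Finset.mem_singleton]
    rintro a rfl
    simp [hT_def]
  have hIF := hX_indep.indepFun_finset {0} T hST hX_meas
  -- the two ℝ≥0∞-valued functions
  set φ : EuclideanSpace ℝ (Fin d) → ℝ≥0∞ := fun x =>
    Set.indicator {y : EuclideanSpace ℝ (Fin d) | 2 * M ≤ ‖y‖}
      (fun y => ENNReal.ofReal (max (Real.log (‖y‖ / 2)) 0)) x with hφ_def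
  have hφ_meas : Measurable φ := by
    refine Measurable.indicator ?_ (measurableSet_le measurable_const measurable_norm)
    exact ENNReal.measurable_ofReal.comp ((measurable_norm.div_const 2).log.max measurable_const)
  set ψ : ({x // x ∈ T} → EuclideanSpace ℝ (Fin d)) → ℝ≥0∞ := fun v =>
    Set.indicator {w : {x // x ∈ T} → EuclideanSpace ℝ (Fin d) | ∀ j, ‖w j‖ ≤ M} 1 v with hψ_def
  have hψ_meas : Measurable ψ := by
    refine Measurable.indicator measurable_const ?_
    have hs : {w : {x // x ∈ T} → EuclideanSpace ℝ (Fin d) | ∀ j, ‖w j‖ ≤ M}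
        = ⋂ j, {w | ‖w j‖ ≤ M} := by
      ext w; simp
    rw [hs]
    exact MeasurableSet.iInter fun j =>
      measurableSet_le (measurable_norm.comp (measurable_pi_apply j)) measurable_const
  have hψA : ∀ ω, ψ (fun j : {x // x ∈ T} => X j ω) = A.indicator 1 ω := by
    intro ω
    have hmem : ((fun j : {x // x ∈ T} => X j ω) ∈
        {w : {x // x ∈ T} → EuclideanSpace ℝ (Fin d) | ∀ j, ‖w j‖ ≤ M}) ↔ ω ∈ A := by
      simp [hA_def, Set.mem_iInter, Subtype.forall]
    by_cases h : ω ∈ A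
    · rw [hψ_def]
      simp only
      rw [Set.indicator_of_mem (hmem.2 h), Set.indicator_of_mem h]
      simp
    · rw [hψ_def]
      simp only
      rw [Set.indicator_of_notMem (fun hc => h (hmem.1 hc)),
        Set.indicator_of_notMem h]
  -- independence of φ ∘ X 0 and ψ ∘ tuple
  have hindep2 : IndepFun (fun ω => φ (X 0 ω)) (fun ω => ψ (fun j : {x // x ∈ T} => X j ω)) P := by
    have h0mem : (0 : ℕ) ∈ ({0} : Finset ℕ) := Finset.mem_singleton_self 0
    have h := hIF.comp
      (φ := fun v : ({x // x ∈ ({0} : Finset ℕ)} → EuclideanSpace ℝ (Fin d)) => φ (v ⟨0, h0mem⟩))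
      (ψ := ψ) (hφ_meas.comp (measurable_pi_apply _)) hψ_meas
    exact h
  -- product formula
  have htuple_meas : Measurable (fun ω => (fun j : {x // x ∈ T} => X j ω)) :=
    measurable_pi_iff.2 fun j => hX_meas j
  have hprod :
      ∫⁻ ω, φ (X 0 ω) * ψ (fun j : {x // x ∈ T} => X j ω) ∂P
        = (∫⁻ ω, φ (X 0 ω) ∂P) * ∫⁻ ω, ψ (fun j : {x // x ∈ T} => X j ω) ∂P :=
    lintegral_mul_eq_lintegral_mul_lintegral_of_indepFun'' (μ := P)
      ((hφ_meas.comp (hX_meas 0)).aemeasurable) ((hψ_meas.comp htuple_meas).aemeasurable) hindep2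
  have hψ_int : ∫⁻ ω, ψ (fun j : {x // x ∈ T} => X j ω) ∂P = P A := by
    calc ∫⁻ ω, ψ (fun j : {x // x ∈ T} => X j ω) ∂P = ∫⁻ ω, A.indicator 1 ω ∂P :=
          lintegral_congr hψA
      _ = P A := lintegral_indicator_one hA_meas
  -- ∫⁻ φ(X 0) = ⊤
  set C : ℝ := Real.log (2 * M) + Real.log 2 with hC_def
  have hlog2M : (0 : ℝ) ≤ Real.log (2 * M) := Real.log_nonneg (by linarith)
  have hlog2 : (0 : ℝ) ≤ Real.log 2 := Real.log_nonneg one_le_two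
  have hC_nonneg : (0 : ℝ) ≤ C := by rw [hC_def]; linarith
  have hφ_top : ∫⁻ ω, φ (X 0 ω) ∂P = ⊤ := by
    have hpt : ∀ ω, ENNReal.ofReal (max (Real.log ‖X 0 ω‖) 0)
        ≤ φ (X 0 ω) + ENNReal.ofReal C := by
      intro ω
      by_cases hx : 2 * M ≤ ‖X 0 ω‖
      · have hx0 : (0 : ℝ) < ‖X 0 ω‖ := lt_of_lt_of_le (by linarith) hx
        rw [hφ_def]
        simp only
        rw [Set.indicator_of_mem
          (show X 0 ω ∈ {y : EuclideanSpace ℝ (Fin d) | 2 * M ≤ ‖y‖} from hx)]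
        have hlogeq : Real.log ‖X 0 ω‖ = Real.log (‖X 0 ω‖ / 2) + Real.log 2 := by
          rw [Real.log_div hx0.ne' two_ne_zero]; ring
        have hle : max (Real.log ‖X 0 ω‖) 0 ≤ max (Real.log (‖X 0 ω‖ / 2)) 0 + C := by
          refine max_le ?_ (by positivity)
          rw [hlogeq, hC_def]
          have h3 := le_max_left (Real.log (‖X 0 ω‖ / 2)) 0
          linarith
        calc ENNReal.ofReal (max (Real.log ‖X 0 ω‖) 0)
            ≤ ENNReal.ofReal (max (Real.log (‖X 0 ω‖ / 2)) 0 + C) := ENNReal.ofReal_le_ofReal hle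
          _ = ENNReal.ofReal (max (Real.log (‖X 0 ω‖ / 2)) 0) + ENNReal.ofReal C :=
              ENNReal.ofReal_add (le_max_right _ _) hC_nonneg
      · rw [hφ_def]
        simp only
        rw [Set.indicator_of_notMem
          (show X 0 ω ∉ {y : EuclideanSpace ℝ (Fin d) | 2 * M ≤ ‖y‖} from hx), zero_add]
        refine ENNReal.ofReal_le_ofReal (max_le ?_ hC_nonneg)
        by_cases hx1 : ‖X 0 ω‖ ≤ 1
        · exact le_trans (Real.log_nonpos (norm_nonneg _) hx1) hC_nonneg
        · push_neg at hx1
          have h1 : Real.log ‖X 0 ω‖ ≤ Real.log (2 * M) := by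
            refine Real.log_le_log (by linarith) ?_
            linarith [not_le.1 hx]
          rw [hC_def]; linarith
    have hle : (∫⁻ ω, ENNReal.ofReal (max (Real.log ‖X 0 ω‖) 0) ∂P)
        ≤ (∫⁻ ω, φ (X 0 ω) ∂P) + ENNReal.ofReal C := by
      calc (∫⁻ ω, ENNReal.ofReal (max (Real.log ‖X 0 ω‖) 0) ∂P)
          ≤ ∫⁻ ω, φ (X 0 ω) + ENNReal.ofReal C ∂P := lintegral_mono hpt
        _ = (∫⁻ ω, φ (X 0 ω) ∂P) + ∫⁻ _ω, ENNReal.ofReal C ∂P :=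
            lintegral_add_right _ measurable_const
        _ = (∫⁻ ω, φ (X 0 ω) ∂P) + ENNReal.ofReal C := by
            rw [lintegral_const, measure_univ, mul_one]
    rw [hinf] at hle
    by_contra h
    exact (ENNReal.add_ne_top.2 ⟨h, ENNReal.ofReal_ne_top⟩) (top_le_iff.1 hle)
  -- final pointwise comparison
  have hfin : ∀ ω, φ (X 0 ω) * ψ (fun j : {x // x ∈ T} => X j ω)
      ≤ ENNReal.ofReal (max (Real.log (nnDist X n 0 (X 0 ω) ω)) 0) := by
    intro ω
    rw [hψA ω]
    by_cases hA' : ω ∈ A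
    · rw [Set.indicator_of_mem hA', Pi.one_apply, mul_one]
      by_cases hx : 2 * M ≤ ‖X 0 ω‖
      · rw [hφ_def]
        simp only
        rw [Set.indicator_of_mem
          (show X 0 ω ∈ {y : EuclideanSpace ℝ (Fin d) | 2 * M ≤ ‖y‖} from hx)]
        refine ENNReal.ofReal_le_ofReal (max_le_max ?_ le_rfl)
        have hxpos : (0 : ℝ) < ‖X 0 ω‖ / 2 := by linarith
        refine Real.log_le_log hxpos ?_
        rw [nnDist]
        refine le_csInf ⟨dist (X 0 ω) (X 1 ω), ⟨1, ⟨by omega, one_ne_zero⟩, rfl⟩⟩ ?_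
        rintro b ⟨j, ⟨hjn, hj0⟩, rfl⟩
        have hjT : j ∈ T := by
          rw [hT_def, Finset.mem_Ico]; omega
        have hXj : ‖X j ω‖ ≤ M := Set.mem_iInter₂.1 hA' j hjT
        have hnsn : ‖X 0 ω‖ - ‖X j ω‖ ≤ ‖X 0 ω - X j ω‖ := norm_sub_norm_le _ _
        simp only [dist_eq_norm]
        linarith
      · rw [hφ_def]
        simp only
        rw [Set.indicator_of_notMem
          (show X 0 ω ∉ {y : EuclideanSpace ℝ (Fin d) | 2 * M ≤ ‖y‖} from hx)]
        exact zero_le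
    · rw [Set.indicator_of_notMem hA', mul_zero]
      exact zero_le
  have hkey : (∫⁻ ω, φ (X 0 ω) * ψ (fun j : {x // x ∈ T} => X j ω) ∂P) = ⊤ := by
    rw [hprod, hψ_int, hφ_top, ENNReal.top_mul hApos]
  refine top_le_iff.1 ?_
  rw [← hkey]
  exact lintegral_mono hfin
end
end

section
/- Let Y_1, …, Y_n be i.i.d. random variables with values in the positive integers and P{Y_1 = j} = 1/(j(j+1)) for j ≥ 1 (n ≥ 2). Then the probability that the maximum of Y_1, …, Y_n is attained by at least two of the indices (equivalently, that the largest and the second largest order statistics are equal) tends to 0 as n → ∞. -/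
open MeasureTheory ProbabilityTheory Filter

noncomputable section

private lemma aux_tele_sum (s : ℕ) :
    ∑ v ∈ Finset.range s, (1:ℝ)/((v+1)*(v+2)) = s/(s+1) := by
  induction s with
  | zero => simp
  | succ s ih =>
    rw [Finset.sum_range_succ, ih]
    have h1 : (s:ℝ)+1 ≠ 0 := by positivity
    have h2 : (s:ℝ)+2 ≠ 0 := by positivity
    push_cast
    field_simp
    ring

private lemma aux_cdf_eq {Ω : Type*} [MeasurableSpace Ω] (P : Measure Ω)
    (Z : Ω → ℕ) (hZ : Measurable Z) (hZpos : ∀ᵐ ω ∂P, 1 ≤ Z ω)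
    (hZlaw : ∀ j : ℕ, 1 ≤ j → P {ω | Z ω = j} = ENNReal.ofReal (1 / (j * (j + 1) : ℝ)))
    (s : ℕ) : P {ω | Z ω ≤ s} = ENNReal.ofReal ((s:ℝ)/(s+1)) := by
  have h0 : P {ω | Z ω = 0} = 0 := by
    refine measure_mono_null (fun ω hω => ?_) (ae_iff.mp hZpos)
    simp only [Set.mem_setOf_eq] at hω ⊢; omega
  have hset : {ω | Z ω ≤ s} = ⋃ v ∈ Finset.range (s+1), Z ⁻¹' {v} := by
    ext ω; simp [Nat.lt_succ_iff]
  rw [hset, measure_biUnion_finset]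
  · rw [Finset.sum_range_succ']
    have : P (Z ⁻¹' {0}) = 0 := h0
    rw [this, add_zero]
    have : ∀ v ∈ Finset.range s, P (Z ⁻¹' {v+1}) = ENNReal.ofReal ((1:ℝ)/((v+1)*(v+2))) := by
      intro v _
      have := hZlaw (v+1) (by omega)
      rw [show Z ⁻¹' {v+1} = {ω | Z ω = v+1} from rfl, this]
      push_cast
      ring_nf
    rw [Finset.sum_congr rfl this, ← ENNReal.ofReal_sum_of_nonneg (fun v _ => by positivity),
      aux_tele_sum]
  · intro a _ b _ hab
    exact Set.disjoint_left.mpr (fun ω ha hb => hab (by simp at ha hb; omega))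
  · exact fun v _ => hZ (measurableSet_singleton v)

private lemma aux_tail_eq {Ω : Type*} [MeasurableSpace Ω] (P : Measure Ω)
    [IsProbabilityMeasure P]
    (Z : Ω → ℕ) (hZ : Measurable Z) (hZpos : ∀ᵐ ω ∂P, 1 ≤ Z ω)
    (hZlaw : ∀ j : ℕ, 1 ≤ j → P {ω | Z ω = j} = ENNReal.ofReal (1 / (j * (j + 1) : ℝ)))
    (s : ℕ) : P {ω | s + 1 ≤ Z ω} = ENNReal.ofReal (1/(s+1:ℝ)) := by
  have hc : ({ω | s + 1 ≤ Z ω} : Set Ω) = {ω | Z ω ≤ s}ᶜ := Set.ext fun ω => by simp only [Set.mem_setOf_eq, Set.mem_compl_iff, not_le]; omega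
  rw [hc, prob_compl_eq_one_sub (show MeasurableSet {ω | Z ω ≤ s} from hZ measurableSet_Iic),
    aux_cdf_eq P Z hZ hZpos hZlaw]
  rw [← ENNReal.ofReal_one, ← ENNReal.ofReal_sub _ (by positivity)]
  congr 1
  have : (s:ℝ)+1 ≠ 0 := by positivity
  field_simp
  ring

private lemma aux_pair_le {Ω : Type*} [MeasurableSpace Ω] (P : Measure Ω)
    (Z1 Z2 : Ω → ℕ) (h2 : Measurable Z2)
    (hlaw1 : ∀ j : ℕ, 1 ≤ j → P {ω | Z1 ω = j} = ENNReal.ofReal (1 / (j * (j + 1) : ℝ)))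
    (hind : IndepFun Z1 Z2 P) (s : ℕ)
    (tail_eq2 : P {ω | s + 1 ≤ Z2 ω} = ENNReal.ofReal (1/(s+1:ℝ))) :
    P {ω | Z1 ω = Z2 ω ∧ s + 1 ≤ Z1 ω} ≤ ENNReal.ofReal (1/((s+1:ℝ)^3)) := by
  set t := s + 1 with ht
  set c : ENNReal := ENNReal.ofReal (1/((t:ℝ)*(t+1))) with hc
  have hsub : {ω | Z1 ω = Z2 ω ∧ t ≤ Z1 ω} ⊆
      ⋃ v, (if t ≤ v then Z1 ⁻¹' {v} ∩ Z2 ⁻¹' {v} else ∅) := by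
    intro ω ⟨he, hge⟩
    refine Set.mem_iUnion.mpr ⟨Z1 ω, ?_⟩
    rw [if_pos hge]
    exact ⟨rfl, he.symm⟩
  refine le_trans (le_trans (measure_mono hsub) (measure_iUnion_le _)) ?_
  have hbound : ∀ v : ℕ, P (if t ≤ v then Z1 ⁻¹' {v} ∩ Z2 ⁻¹' {v} else ∅) ≤
      c * P (if t ≤ v then Z2 ⁻¹' {v} else ∅) := by
    intro v
    by_cases hv : t ≤ v
    · rw [if_pos hv, if_pos hv]
      have := hind.measure_inter_preimage_eq_mul {v} {v} (measurableSet_singleton v)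
        (measurableSet_singleton v)
      rw [this]
      gcongr
      rw [show Z1 ⁻¹' {v} = {ω | Z1 ω = v} from rfl, hlaw1 v (by omega), hc]
      apply ENNReal.ofReal_le_ofReal
      have h1 : (0:ℝ) < t := by positivity
      have h2 : (0:ℝ) < v := by exact_mod_cast Nat.lt_of_lt_of_le (by omega) hv
      apply one_div_le_one_div_of_le (by positivity)
      have hv' : (t:ℝ) ≤ v := by exact_mod_cast hv
      nlinarith
    · simp [hv]
  refine le_trans (ENNReal.tsum_le_tsum hbound) ?_
  rw [ENNReal.tsum_mul_left]
  have hunion : ∑' v : ℕ, P (if t ≤ v then Z2 ⁻¹' {v} else ∅) = P {ω | t ≤ Z2 ω} := by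
    rw [← measure_iUnion]
    · congr 1
      ext ω
      simp only [Set.mem_iUnion]
      constructor
      · rintro ⟨v, hv⟩
        by_cases h : t ≤ v
        · rw [if_pos h] at hv
          simp only [Set.mem_preimage, Set.mem_singleton_iff] at hv
          simpa [hv] using h
        · rw [if_neg h] at hv; exact absurd hv (Set.notMem_empty ω)
      · intro h
        exact ⟨Z2 ω, by rw [if_pos (show t ≤ Z2 ω from h)]; rfl⟩
    · intro a b hab
      by_cases ha : t ≤ a <;> by_cases hb : t ≤ b <;>
        simp [ha, hb, Set.disjoint_left] <;> intro ω h1 h2 <;> omega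
    · intro v
      by_cases h : t ≤ v
      · rw [if_pos h]; exact h2 (measurableSet_singleton v)
      · rw [if_neg h]; exact MeasurableSet.empty
  rw [hunion, tail_eq2, hc, ← ENNReal.ofReal_mul (by positivity)]
  apply ENNReal.ofReal_le_ofReal
  have h1 : (0:ℝ) < t := by positivity
  rw [div_mul_div_comm, one_mul]
  apply one_div_le_one_div_of_le (by positivity)
  push_cast [ht]
  nlinarith

private lemma aux_allsmall {Ω : Type*} [MeasurableSpace Ω] (P : Measure Ω) (Y : ℕ → Ω → ℕ)
    (hY_indep : iIndepFun Y P)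
    (cdf : ∀ i s : ℕ, P {ω | Y i ω ≤ s} = ENNReal.ofReal ((s:ℝ)/(s+1)))
    (n s : ℕ) :
    P {ω | ∀ k < n, Y k ω ≤ s} = ENNReal.ofReal ((s:ℝ)/(s+1)) ^ n := by
  have hset : {ω | ∀ k < n, Y k ω ≤ s} = ⋂ k ∈ Finset.range n, Y k ⁻¹' Set.Iic s := by
    ext ω; simp [Set.mem_iInter]
  rw [hset, hY_indep.meas_biInter (fun i _ => ⟨Set.Iic s, measurableSet_Iic, rfl⟩)]
  have : ∀ k ∈ Finset.range n, P (Y k ⁻¹' Set.Iic s) = ENNReal.ofReal ((s:ℝ)/(s+1)) :=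
    fun k _ => cdf k s
  rw [Finset.prod_congr rfl this, Finset.prod_const, Finset.card_range]

private lemma aux_main_bound {Ω : Type*} [MeasurableSpace Ω] (P : Measure Ω) (Y : ℕ → Ω → ℕ)
    (pair : ∀ i j : ℕ, i ≠ j → ∀ s : ℕ,
      P {ω | Y i ω = Y j ω ∧ s + 1 ≤ Y i ω} ≤ ENNReal.ofReal (1/((s+1:ℝ)^3)))
    (allsm : ∀ n s : ℕ, P {ω | ∀ k < n, Y k ω ≤ s} = ENNReal.ofReal ((s:ℝ)/(s+1)) ^ n)
    (n s : ℕ) :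
    P {ω | ∃ i < n, ∃ j < n, i ≠ j ∧ Y i ω = Y j ω ∧ ∀ k < n, Y k ω ≤ Y i ω} ≤
      (n:ENNReal)^2 * ENNReal.ofReal (1/((s+1:ℝ)^3)) + ENNReal.ofReal ((s:ℝ)/(s+1)) ^ n := by
  set D : ℕ × ℕ → Set Ω :=
    fun p => {ω | p.1 ≠ p.2 ∧ Y p.1 ω = Y p.2 ω ∧ s + 1 ≤ Y p.1 ω} with hD
  have hsub : {ω | ∃ i < n, ∃ j < n, i ≠ j ∧ Y i ω = Y j ω ∧ ∀ k < n, Y k ω ≤ Y i ω} ⊆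
      (⋃ p ∈ Finset.range n ×ˢ Finset.range n, D p) ∪ {ω | ∀ k < n, Y k ω ≤ s} := by
    rintro ω ⟨i, hi, j, hj, hij, heq, hmax⟩
    by_cases hbig : s + 1 ≤ Y i ω
    · left
      exact Set.mem_biUnion (Finset.mem_product.mpr ⟨Finset.mem_range.mpr hi,
        Finset.mem_range.mpr hj⟩) (show ω ∈ D (i, j) from ⟨hij, heq, hbig⟩)
    · right
      exact fun k hk => le_trans (hmax k hk) (by omega)
  refine le_trans (measure_mono hsub) (le_trans (measure_union_le _ _) ?_)
  gcongr
  · refine le_trans (measure_biUnion_finset_le _ _) ?_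
    have hterm : ∀ p ∈ Finset.range n ×ˢ Finset.range n,
        P (D p) ≤ ENNReal.ofReal (1/((s+1:ℝ)^3)) := by
      rintro ⟨i, j⟩ _
      by_cases hij : i = j
      · have : D (i, j) = ∅ := by ext ω; simp [hD, hij]
        simp [this]
      · refine le_trans (measure_mono ?_) (pair i j hij s)
        exact fun ω hω => ⟨hω.2.1, hω.2.2⟩
    refine le_trans (Finset.sum_le_sum hterm) ?_
    rw [Finset.sum_const, Finset.card_product, Finset.card_range, nsmul_eq_mul]
    push_cast
    rw [pow_two]
  · exact le_of_eq (allsm n s)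

private lemma aux_nat_facts {n : ℕ} (hn : 16 ≤ n) :
    2 ≤ n.sqrt.sqrt ∧ (n.sqrt.sqrt)^4 ≤ n ∧ 1 ≤ n / n.sqrt.sqrt ∧
    (n / n.sqrt.sqrt) * n.sqrt.sqrt ≤ n ∧ n ≤ 2 * n.sqrt.sqrt * (n / n.sqrt.sqrt) ∧
    n^2 * n.sqrt.sqrt ≤ 8 * (n / n.sqrt.sqrt)^3 := by
  set r := n.sqrt.sqrt with hrdef
  have hr2 : 2 ≤ r := by
    rw [hrdef, Nat.le_sqrt, Nat.le_sqrt]; omega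
  have hr4 : r^4 ≤ n := by
    have h1 : r ^ 2 ≤ n.sqrt := Nat.sqrt_le' n.sqrt
    have h2 : n.sqrt ^ 2 ≤ n := Nat.sqrt_le' n
    calc r^4 = (r^2)^2 := by ring
    _ ≤ n.sqrt ^ 2 := Nat.pow_le_pow_left h1 2
    _ ≤ n := h2
  set t := n / r with htdef
  have hrn : r ≤ n := le_trans (Nat.le_self_pow (by norm_num) r) hr4
  have ht1 : 1 ≤ t := (Nat.one_le_div_iff (by omega)).mpr hrn
  have htr : t * r ≤ n := by rw [htdef]; exact Nat.div_mul_le_self n r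
  have hup : n ≤ 2 * r * t := by
    have hmod : n % r < r := Nat.mod_lt n (by omega)
    have hdm : r * t + n % r = n := Nat.div_add_mod n r
    nlinarith
  refine ⟨hr2, hr4, ht1, htr, hup, ?_⟩
  have h8 : n^3 ≤ 8 * (r*t)^3 := by
    calc n^3 ≤ (2*r*t)^3 := Nat.pow_le_pow_left hup 3
    _ = 8 * (r*t)^3 := by ring
  have h9 : (n^2 * r) * r^3 ≤ (8 * t^3) * r^3 := by
    calc (n^2 * r) * r^3 = n^2 * r^4 := by ring
    _ ≤ n^2 * n := Nat.mul_le_mul_left _ hr4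
    _ = n^3 := by ring
    _ ≤ 8 * (r*t)^3 := h8
    _ = (8 * t^3) * r^3 := by ring
  exact Nat.le_of_mul_le_mul_right h9 (by positivity)

private lemma aux_ennreal_bound {n r t : ℕ} (hr2 : 2 ≤ r) (ht1 : 1 ≤ t)
    (htr : t * r ≤ n) (hmain : n^2 * r ≤ 8 * t^3) (s : ℕ) (hst : s + 1 = t) :
    (n:ENNReal)^2 * ENNReal.ofReal (1/((s+1:ℝ)^3)) + ENNReal.ofReal ((s:ℝ)/(s+1)) ^ n ≤
      ENNReal.ofReal (8/(r:ℝ)) + ENNReal.ofReal (Real.exp (-(r:ℝ))) := by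
  have hstR : (s:ℝ) + 1 = (t:ℝ) := by exact_mod_cast hst
  have htR : (0:ℝ) < t := by positivity
  have hrR : (0:ℝ) < r := by positivity
  gcongr
  · rw [← ENNReal.ofReal_natCast n, ← ENNReal.ofReal_pow (by positivity),
      ← ENNReal.ofReal_mul (by positivity)]
    apply ENNReal.ofReal_le_ofReal
    rw [hstR, mul_one_div, div_le_div_iff₀ (by positivity) hrR]
    calc ((n:ℝ))^2 * r = ((n^2 * r : ℕ) : ℝ) := by push_cast; ring
    _ ≤ ((8 * t^3 : ℕ) : ℝ) := by exact_mod_cast hmain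
    _ = 8 * (t:ℝ)^3 := by push_cast; ring
  · have ha : (0:ℝ) ≤ (s:ℝ)/(s+1) := by positivity
    rw [← ENNReal.ofReal_pow ha]
    apply ENNReal.ofReal_le_ofReal
    have h1 : (s:ℝ)/(s+1) ≤ Real.exp (-(1/t)) := by
      have := Real.add_one_le_exp (-(1/(t:ℝ)))
      have heq : (s:ℝ)/(s+1) = -(1/t) + 1 := by
        rw [hstR]
        field_simp
        linarith
      linarith [heq ▸ this]
    calc ((s:ℝ)/(s+1))^n ≤ (Real.exp (-(1/t)))^n := pow_le_pow_left₀ ha h1 n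
    _ = Real.exp (-(n/t)) := by
        rw [← Real.exp_nat_mul]; congr 1; field_simp
    _ ≤ Real.exp (-(r:ℝ)) := by
        apply Real.exp_le_exp.mpr
        rw [neg_le_neg_iff, le_div_iff₀ htR]
        exact_mod_cast (mul_comm (r) t ▸ htr)

private lemma aux_g_tendsto : Tendsto (fun n : ℕ =>
    ENNReal.ofReal (8/((n.sqrt.sqrt : ℕ):ℝ)) +
      ENNReal.ofReal (Real.exp (-((n.sqrt.sqrt : ℕ):ℝ)))) atTop (nhds 0) := by
  have hr : Tendsto (fun n : ℕ => n.sqrt.sqrt) atTop atTop := by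
    apply tendsto_atTop_atTop.mpr
    intro b
    exact ⟨(b*b)*(b*b), fun n hn => Nat.le_sqrt.mpr (Nat.le_sqrt.mpr hn)⟩
  have hcast : Tendsto (fun n : ℕ => ((n.sqrt.sqrt : ℕ):ℝ)) atTop atTop :=
    tendsto_natCast_atTop_atTop.comp hr
  have h1 : Tendsto (fun n : ℕ => (8:ℝ)/((n.sqrt.sqrt : ℕ):ℝ)) atTop (nhds 0) :=
    tendsto_const_nhds.div_atTop hcast
  have h2 : Tendsto (fun n : ℕ => Real.exp (-((n.sqrt.sqrt : ℕ):ℝ))) atTop (nhds 0) :=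
    Real.tendsto_exp_atBot.comp (tendsto_neg_atTop_atBot.comp hcast)
  have := (ENNReal.tendsto_ofReal h1).add (ENNReal.tendsto_ofReal h2)
  simpa using this

/-- Let `Y_1, …, Y_n` be i.i.d. positive-integer valued with
`P{Y = j} = 1/(j(j+1))` for `j ≥ 1`. Then the probability that the maximum of the
sample is attained by at least two indices (i.e. the two largest order statistics
coincide) tends to `0` as `n → ∞`. -/
theorem prob_tied_maximum_tendsto_zero
    {Ω : Type*} [MeasurableSpace Ω] (P : Measure Ω) [IsProbabilityMeasure P]
    (Y : ℕ → Ω → ℕ)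
    (hY_meas : ∀ i, Measurable (Y i))
    (hY_indep : iIndepFun Y P)
    (hY_pos : ∀ i, ∀ᵐ ω ∂P, 1 ≤ Y i ω)
    (hY_law : ∀ i, ∀ j : ℕ, 1 ≤ j →
      P {ω | Y i ω = j} = ENNReal.ofReal (1 / (j * (j + 1) : ℝ))) :
    Tendsto
      (fun n =>
        P {ω | ∃ i < n, ∃ j < n, i ≠ j ∧ Y i ω = Y j ω ∧ ∀ k < n, Y k ω ≤ Y i ω})
      atTop (nhds 0) := by
  have cdf : ∀ i s : ℕ, P {ω | Y i ω ≤ s} = ENNReal.ofReal ((s:ℝ)/(s+1)) :=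
    fun i s => aux_cdf_eq P (Y i) (hY_meas i) (hY_pos i) (hY_law i) s
  have tail : ∀ i s : ℕ, P {ω | s + 1 ≤ Y i ω} = ENNReal.ofReal (1/(s+1:ℝ)) :=
    fun i s => aux_tail_eq P (Y i) (hY_meas i) (hY_pos i) (hY_law i) s
  have pair : ∀ i j : ℕ, i ≠ j → ∀ s : ℕ,
      P {ω | Y i ω = Y j ω ∧ s + 1 ≤ Y i ω} ≤ ENNReal.ofReal (1/((s+1:ℝ)^3)) :=
    fun i j hij s => aux_pair_le P (Y i) (Y j) (hY_meas j) (hY_law i)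
      (hY_indep.indepFun hij) s (tail j s)
  have allsm : ∀ n s : ℕ, P {ω | ∀ k < n, Y k ω ≤ s} = ENNReal.ofReal ((s:ℝ)/(s+1)) ^ n :=
    aux_allsmall P Y hY_indep cdf
  refine tendsto_of_tendsto_of_tendsto_of_le_of_le' tendsto_const_nhds aux_g_tendsto
    (Eventually.of_forall fun n => zero_le) ?_
  filter_upwards [eventually_ge_atTop 16] with n hn
  obtain ⟨hr2, _, ht1, htr, _, hmain⟩ := aux_nat_facts hn
  refine le_trans (aux_main_bound P Y pair allsm n (n / n.sqrt.sqrt - 1)) ?_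
  exact aux_ennreal_bound hr2 ht1 htr hmain _ (by omega)

end
end
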